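/- arXiv:1109.5330 — 7 statements merged into one kernel-verified Lean document; each statement's English description precedes it below -/
import Mathlib

section
/- An integral domain D is a Prüfer domain if and only if it is integrally closed (in its field of fractions) and quasi-Prüfer. -/
set_option synthInstance.maxHeartbeats 1000000
set_option maxHeartbeats 1000000

open Polynomial

/-- `D` is a quasi-Prüfer domain: for each prime `P` of `D` and each prime `Q` of `D[X]`
with `Q ⊆ P[X]`, one has `Q = (Q ∩ D)[X]`. -/
def IsQuasiPrufer (D : Type*) [CommRing D] : Prop :=
  ∀ P : Ideal D, P.IsPrime → ∀ Q : Ideal D[X], Q.IsPrime →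
    Q ≤ P.map (C : D →+* D[X]) → Q = (Q.comap (C : D →+* D[X])).map (C : D →+* D[X])

/-- `D` is a Prüfer domain: every nonzero finitely generated ideal is invertible
(as a fractional ideal in the fraction field). -/
def IsPruferDom (D : Type*) [CommRing D] [IsDomain D] : Prop :=
  ∀ I : Ideal D, I ≠ ⊥ → I.FG →
    IsUnit (I : FractionalIdeal (nonZeroDivisors D) (FractionRing D))

/-- The valuative dimension of a domain: the supremum of the Krull dimensions of its
valuation overrings. -/
noncomputable def valuativeDim (R : Type*) [CommRing R] [IsDomain R] : WithBot ℕ∞ :=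
  ⨆ (V : Subalgebra R (FractionRing R)) (_ : ValuationRing V), ringKrullDim V

/-- `P₁ ⊊ P₂` are adjacent primes: both prime, `P₁ < P₂`, and no prime strictly between. -/
def AdjacentPrimes {R : Type*} [CommRing R] (P₁ P₂ : Ideal R) : Prop :=
  P₁.IsPrime ∧ P₂.IsPrime ∧ P₁ < P₂ ∧ ∀ Q : Ideal R, Q.IsPrime → P₁ < Q → ¬ Q < P₂

/-- `D` is a strong S-domain: adjacent primes `P₁ ⊊ P₂` extend to adjacent primes
`P₁[X] ⊊ P₂[X]` of `D[X]`. -/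
def IsStrongS (D : Type*) [CommRing D] : Prop :=
  ∀ P₁ P₂ : Ideal D, AdjacentPrimes P₁ P₂ →
    AdjacentPrimes (P₁.map (C : D →+* D[X])) (P₂.map (C : D →+* D[X]))

/-- Transcendence degree: the supremum of cardinalities of algebraically independent
subsets. -/
noncomputable def trdeg (F E : Type*) [CommRing F] [CommRing E] [Algebra F E] : Cardinal :=
  ⨆ s : {s : Set E // AlgebraicIndependent F ((↑) : s → E)}, Cardinal.mk s.1

section Pullback

variable (D : Type*) [CommRing D] [IsDomain D] (T : Subalgebra D (FractionRing D))
  (Q : Ideal T) [Q.IsPrime]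

instance : IsDomain (Localization.AtPrime Q) :=
  IsLocalization.isDomain_localization Q.primeCompl_le_nonZeroDivisors

/-- The copy of the residue field `k(q) = Frac(D/q)` (where `q = Q ∩ D`) inside the residue
field `k(Q) = T_Q/QT_Q`: the subfield generated by the image of `D`. -/
noncomputable def kqSub : Subfield (IsLocalRing.ResidueField (Localization.AtPrime Q)) :=
  Subfield.closure (Set.range ((IsLocalRing.residue (Localization.AtPrime Q)).comp
    ((algebraMap T (Localization.AtPrime Q)).comp (algebraMap D T))))

/-- The pullback ring `D(Q) = D_q + QT_Q`: the preimage of `k(q) ⊆ k(Q)` under the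
canonical surjection `T_Q → k(Q)`. -/
noncomputable def DQ : Subring (Localization.AtPrime Q) :=
  (kqSub D T Q).toSubring.comap (IsLocalRing.residue (Localization.AtPrime Q))

end Pullback

section Aux

lemma finset_exists_dvd_all {R : Type*} [CommRing R] [IsDomain R] [ValuationRing R] :
    ∀ (S : Finset R), S.Nonempty → ∃ g ∈ S, ∀ i ∈ S, g ∣ i := by
  classical
  intro S
  induction S using Finset.induction_on with
  | empty => intro h; simp at h
  | insert _ => next a S _ ih =>
    intro _
    by_cases hS : S.Nonempty
    · obtain ⟨g, hg, hall⟩ := ih hS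
      rcases ValuationRing.dvd_total a g with h | h
      · exact ⟨a, Finset.mem_insert_self a S, fun i hi => by
          rcases Finset.mem_insert.mp hi with rfl | hi
          · exact dvd_rfl
          · exact h.trans (hall i hi)⟩
      · exact ⟨g, Finset.mem_insert_of_mem hg, fun i hi => by
          rcases Finset.mem_insert.mp hi with rfl | hi
          · exact h
          · exact hall i hi⟩
    · rw [Finset.not_nonempty_iff_eq_empty] at hS
      subst hS
      exact ⟨a, Finset.mem_insert_self a _, fun i hi => by
        rcases Finset.mem_insert.mp hi with rfl | hi
        · exact dvd_rfl
        · simp at hi⟩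


variable {D : Type*} [CommRing D] [IsDomain D]

section KeyL
variable {K : Type*} [Field K] [Algebra D K] [IsFractionRing D K]

omit [IsDomain D] in
lemma keyL [IsIntegrallyClosed D] (m : Ideal D) (hm : m.IsPrime) :
    ∀ (n : ℕ) (f : D[X]) (u : K), f.natDegree ≤ n → Polynomial.aeval u f = 0 →
      (∃ k, f.coeff k ∉ m) →
      (∃ a b : D, b ∉ m ∧ algebraMap D K b * u = algebraMap D K a) ∨
      (∃ a b : D, b ∉ m ∧ algebraMap D K b * u⁻¹ = algebraMap D K a) := by
  have hinj : Function.Injective (algebraMap D K) := IsFractionRing.injective D K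
  have h1m : (1 : D) ∉ m := fun h => hm.ne_top (Ideal.eq_top_of_isUnit_mem m h isUnit_one)
  intro n
  induction n with
  | zero =>
    intro f u hdeg hev ⟨k, hk⟩
    exfalso
    apply hk
    have hC : f = C (f.coeff 0) := f.eq_C_of_natDegree_le_zero hdeg
    rw [hC, aeval_C] at hev
    have h0 : f.coeff 0 = 0 := by
      apply hinj; rw [hev, map_zero]
    have : f = 0 := by rw [hC, h0, map_zero]
    rw [this]
    simp only [coeff_zero]
    exact m.zero_mem
  | succ n ih =>
    intro f u hdeg hev ⟨k, hk⟩
    by_cases hd : f.natDegree ≤ n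
    · exact ih f u hd hev ⟨k, hk⟩
    have hn1 : f.natDegree = n + 1 := le_antisymm hdeg (not_le.mp hd)
    by_cases hu : u = 0
    · exact Or.inl ⟨0, 1, h1m, by simp [hu]⟩
    -- k ≤ natDegree
    have hkle : k ≤ f.natDegree := by
      by_contra hkk
      exact hk (by rw [f.coeff_eq_zero_of_natDegree_lt (not_le.mp hkk)]; exact m.zero_mem)
    have hint : IsIntegral D (f.leadingCoeff • u) := by
      exact isIntegral_leadingCoeff_smul f u hev
    obtain ⟨v, hv⟩ := IsIntegrallyClosed.isIntegral_iff.mp hint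
    by_cases hkn : k = f.natDegree
    · -- leading coefficient not in m : u = v / leadingCoeff
      refine Or.inl ⟨v, f.leadingCoeff, ?_, ?_⟩
      · rwa [← coeff_natDegree, ← hkn]
      · rw [hv, Algebra.smul_def]
    by_cases hvm : v ∉ m
    · -- u⁻¹ = leadingCoeff / v
      refine Or.inr ⟨f.leadingCoeff, v, hvm, ?_⟩
      rw [hv, Algebra.smul_def, mul_assoc, mul_inv_cancel₀ hu, mul_one]
    push_neg at hvm
    -- inductive step with g = eraseLead f + C v * X ^ n
    set g : D[X] := f.eraseLead + C v * X ^ n with hg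
    have hgdeg : g.natDegree ≤ n := by
      apply le_trans (natDegree_add_le _ _)
      apply max_le
      · have := f.eraseLead_natDegree_le
        omega
      · exact le_trans (natDegree_C_mul_le _ _) (natDegree_X_pow_le n)
    have hgev : Polynomial.aeval u g = 0 := by
      have hf' : f.eraseLead + C f.leadingCoeff * X ^ f.natDegree = f :=
        f.eraseLead_add_C_mul_X_pow
      have : Polynomial.aeval u f =
          Polynomial.aeval u f.eraseLead + algebraMap D K f.leadingCoeff * u ^ f.natDegree := by
        conv_lhs => rw [← hf']
        simp only [map_add, map_mul, aeval_C, map_pow, aeval_X]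
      rw [this] at hev
      have hvu : algebraMap D K v = algebraMap D K f.leadingCoeff * u := by
        rw [hv, Algebra.smul_def]
      rw [hg]
      simp only [map_add, map_mul, aeval_C, map_pow, aeval_X]
      rw [hvu, ← hev, hn1]
      ring
    refine ih g u hgdeg hgev ⟨k, ?_⟩
    have hklt : k < f.natDegree := lt_of_le_of_ne hkle hkn
    have herase : f.eraseLead.coeff k = f.coeff k := Polynomial.eraseLead_coeff_of_ne k (by omega)
    by_cases hkn' : k = n
    · -- coeff = f.coeff n + v
      have : g.coeff k = f.coeff k + v := by
        rw [hg, coeff_add, herase, coeff_C_mul, coeff_X_pow, hkn', if_pos rfl, mul_one]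
      rw [this]
      intro hmem
      apply hk
      have : f.coeff k = (f.coeff k + v) - v := by ring
      rw [this]
      exact m.sub_mem hmem hvm
    · have : g.coeff k = f.coeff k := by
        rw [hg, coeff_add, herase, coeff_C_mul, coeff_X_pow, if_neg hkn', mul_zero, add_zero]
      rwa [this]

end KeyL

lemma isInteger_of_rep (m : Ideal D) [m.IsPrime] (u : FractionRing D)
    (h : ∃ a b : D, b ∉ m ∧ algebraMap D (FractionRing D) b * u = algebraMap D (FractionRing D) a) :
    IsLocalization.IsInteger (Localization.AtPrime m) u := by
  obtain ⟨a, b, hb, hab⟩ := h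
  have hb0 : b ≠ 0 := fun h => hb (h ▸ m.zero_mem)
  refine ⟨IsLocalization.mk' (Localization.AtPrime m) a (⟨b, hb⟩ : m.primeCompl), ?_⟩
  have tower : ∀ d : D, algebraMap (Localization.AtPrime m) (FractionRing D)
      (algebraMap D (Localization.AtPrime m) d) = algebraMap D (FractionRing D) d := by
    intro d
    rw [← IsScalarTower.algebraMap_apply]
  have hbK : algebraMap D (FractionRing D) b ≠ 0 := by
    simpa using (map_ne_zero_iff _ (IsFractionRing.injective D (FractionRing D))).mpr hb0
  apply mul_right_cancel₀ hbK
  rw [mul_comm u, hab, ← tower b, ← map_mul, IsLocalization.mk'_spec, tower]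


lemma valuation_at [IsIntegrallyClosed D] (hqp : IsQuasiPrufer D)
    (m : Ideal D) [m.IsMaximal] : ValuationRing (Localization.AtPrime m) := by
  have hm : m.IsPrime := inferInstance
  rw [ValuationRing.iff_isInteger_or_isInteger (Localization.AtPrime m) (FractionRing D)]
  intro u
  by_cases hu : u = 0
  · exact Or.inl ⟨0, by simp [hu]⟩
  obtain ⟨a, b, hb, hab⟩ := IsFractionRing.div_surjective (A := D) u
  have hbK : algebraMap D (FractionRing D) b ≠ 0 :=
    IsFractionRing.to_map_ne_zero_of_mem_nonZeroDivisors hb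
  set Q : Ideal (Polynomial D) := RingHom.ker (Polynomial.aeval u).toRingHom with hQdef
  haveI hQp : Q.IsPrime := RingHom.ker_isPrime _
  have hQcomap : Q.comap (C : D →+* Polynomial D) = ⊥ := by
    ext c
    simp only [Ideal.mem_comap, Ideal.mem_bot, hQdef, RingHom.mem_ker,
      AlgHom.toRingHom_eq_coe, RingHom.coe_coe, aeval_C]
    constructor
    · intro h
      exact IsFractionRing.injective D (FractionRing D) (by rw [h, map_zero])
    · rintro rfl; exact map_zero _
  have hmem : C b * X - C a ∈ Q := by
    simp only [hQdef, RingHom.mem_ker, AlgHom.toRingHom_eq_coe, RingHom.coe_coe,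
      map_sub, map_mul, aeval_C, aeval_X]
    rw [← hab, mul_comm, div_mul_cancel₀ _ hbK, sub_self]
  have hQnotle : ¬ Q ≤ m.map (C : D →+* Polynomial D) := by
    intro hle
    have := hqp m hm Q hQp hle
    rw [hQcomap, Ideal.map_bot] at this
    have h0 : C b * X - C a = 0 := by rw [← Ideal.mem_bot, ← this]; exact hmem
    have : b = 0 := by
      have := congrArg (fun p => Polynomial.coeff p 1) h0
      simpa [coeff_sub, coeff_C_mul, coeff_X_one, coeff_C] using this
    exact nonZeroDivisors.ne_zero hb this
  obtain ⟨f, hfQ, hfm⟩ := SetLike.not_le_iff_exists.mp hQnotle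
  have hfev : Polynomial.aeval u f = 0 := hfQ
  have hcoeff : ∃ k, f.coeff k ∉ m := by
    by_contra h
    push_neg at h
    exact hfm (Ideal.mem_map_C_iff.mpr h)
  rcases keyL m hm f.natDegree f u le_rfl hfev hcoeff with h | h
  · exact Or.inl (isInteger_of_rep m u h)
  · exact Or.inr (isInteger_of_rep m u⁻¹ h)


lemma dirA (hpr : IsPruferDom D) : IsIntegrallyClosed D := by
  classical
  rw [isIntegrallyClosed_iff (FractionRing D)]
  intro x hx
  obtain ⟨f, hmonic, hev⟩ := hx
  set n := f.natDegree with hn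
  have hnpos : 0 < n := by
    rcases Nat.eq_zero_or_pos n with h | h
    · exfalso
      have : f = 1 := hmonic.natDegree_eq_zero.mp h
      rw [this] at hev
      simp at hev
    · exact h
  obtain ⟨a, b, hb, hab⟩ := IsFractionRing.div_surjective (A := D) x
  have hbK : algebraMap D (FractionRing D) b ≠ 0 :=
    IsFractionRing.to_map_ne_zero_of_mem_nonZeroDivisors hb
  have hxb : algebraMap D (FractionRing D) b * x = algebraMap D (FractionRing D) a := by
    rw [← hab, mul_comm, div_mul_cancel₀ _ hbK]
  set gen : ℕ → D := fun i => a ^ i * b ^ (n - 1 - i) with hgen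
  set I : Ideal D := Ideal.span (gen '' Set.Iio n) with hI
  have hIfg : I.FG := Submodule.fg_span ((Set.finite_Iio n).image gen)
  have hb0 : b ≠ 0 := nonZeroDivisors.ne_zero hb
  have hI0 : I ≠ ⊥ := by
    intro h
    have hmem : gen 0 ∈ I := Ideal.subset_span ⟨0, hnpos, rfl⟩
    rw [h, Ideal.mem_bot, hgen] at hmem
    simp only [pow_zero, one_mul, Nat.sub_zero] at hmem
    exact pow_ne_zero _ hb0 hmem
  have hu := hpr I hI0 hIfg
  have hbx : ∀ i : ℕ, i < n → algebraMap D (FractionRing D) b ^ (n-1) * x ^ i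
      = algebraMap D (FractionRing D) (gen i) := by
    intro i hi
    have h1 : (n-1) = i + (n-1-i) := by omega
    calc algebraMap D (FractionRing D) b ^ (n-1) * x ^ i
        = (algebraMap D (FractionRing D) b * x) ^ i
            * algebraMap D (FractionRing D) b ^ (n-1-i) := by
          have hb2 : algebraMap D (FractionRing D) b ^ (n-1)
              = algebraMap D (FractionRing D) b ^ i
                * algebraMap D (FractionRing D) b ^ (n-1-i) := by
            rw [← pow_add]; congr 1
          rw [mul_pow, hb2]; ring
      _ = algebraMap D (FractionRing D) (gen i) := by
          rw [hxb, hgen]; simp only [map_mul, map_pow]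
  have hsum := Polynomial.eval₂_eq_sum_range (S := FractionRing D)
    (algebraMap D (FractionRing D)) x (p := f)
  rw [hsum, Finset.sum_range_succ, ← hn, hmonic.coeff_natDegree, map_one, one_mul] at hev
  rw [add_comm] at hev
  have hxn : x ^ n = - ∑ i ∈ Finset.range n,
      algebraMap D (FractionRing D) (f.coeff i) * x ^ i :=
    eq_neg_of_add_eq_zero_left hev
  have hgenmem : ∀ i, i < n → gen i ∈ I := fun i hi => Ideal.subset_span ⟨i, hi, rfl⟩
  have hxI : ∀ w ∈ I, x * algebraMap D (FractionRing D) w ∈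
      (↑(I : FractionalIdeal (nonZeroDivisors D) (FractionRing D)) :
        Submodule D (FractionRing D)) := by
    intro w hw
    refine Submodule.span_induction ?_ ?_ ?_ ?_ hw
    · rintro _ ⟨i, hi, rfl⟩
      simp only [Set.mem_Iio] at hi
      by_cases hi1 : i + 1 < n
      · have heq : x * algebraMap D (FractionRing D) (gen i)
            = algebraMap D (FractionRing D) (gen (i+1)) := by
          rw [← hbx i hi, ← hbx (i+1) hi1]; ring
        rw [heq]
        exact FractionalIdeal.mem_coe.mpr
          ((FractionalIdeal.mem_coeIdeal _).mpr ⟨gen (i+1), hgenmem _ hi1, rfl⟩)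
      · have hx1 : x * x ^ (n-1) = x ^ n := by
          rw [← pow_succ']; congr 1; omega
        have h1 : x * algebraMap D (FractionRing D) (gen i)
            = algebraMap D (FractionRing D) b ^ (n-1) * x ^ n := by
          have hieq : i = n - 1 := by omega
          rw [← hbx i hi, hieq, ← hx1]; ring
        have h2 : algebraMap D (FractionRing D) b ^ (n-1) * x ^ n
            = algebraMap D (FractionRing D)
              (- ∑ i ∈ Finset.range n, f.coeff i * gen i) := by
          rw [hxn, map_neg, map_sum, mul_neg, Finset.mul_sum]
          congr 1
          apply Finset.sum_congr rfl
          intro i hi'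
          rw [map_mul, ← hbx i (Finset.mem_range.mp hi')]
          ring
        rw [h1, h2]
        refine FractionalIdeal.mem_coe.mpr ((FractionalIdeal.mem_coeIdeal _).mpr ⟨_, ?_, rfl⟩)
        exact neg_mem (Ideal.sum_mem _ fun i hi' =>
          I.mul_mem_left _ (hgenmem i (Finset.mem_range.mp hi')))
    · simp only [map_zero, mul_zero]
      exact zero_mem _
    · intro w1 w2 _ _ h1 h2
      rw [map_add, mul_add]
      exact add_mem h1 h2
    · intro d w _ hprev
      have hsm := Submodule.smul_mem
        (↑(I : FractionalIdeal (nonZeroDivisors D) (FractionRing D)) :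
          Submodule D (FractionRing D)) d hprev
      rw [Algebra.smul_def] at hsm
      have : x * algebraMap D (FractionRing D) (d • w)
          = algebraMap D (FractionRing D) d * (x * algebraMap D (FractionRing D) w) := by
        rw [smul_eq_mul, map_mul]; ring
      rw [this]
      exact hsm
  have hle : FractionalIdeal.spanSingleton (nonZeroDivisors D) x * ↑I ≤
      (I : FractionalIdeal (nonZeroDivisors D) (FractionRing D)) := by
    rw [FractionalIdeal.spanSingleton_mul_le_iff]
    intro z hz
    obtain ⟨w, hw, rfl⟩ := (FractionalIdeal.mem_coeIdeal _).mp hz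
    exact FractionalIdeal.mem_coe.mp (hxI w hw)
  obtain ⟨V, hV⟩ : ∃ V, (I : FractionalIdeal (nonZeroDivisors D) (FractionRing D)) * V = 1 :=
    ⟨↑hu.unit⁻¹, hu.mul_val_inv⟩
  have hfin : FractionalIdeal.spanSingleton (nonZeroDivisors D) x ≤ 1 := by
    calc FractionalIdeal.spanSingleton (nonZeroDivisors D) x
        = FractionalIdeal.spanSingleton (nonZeroDivisors D) x * (↑I * V) := by
          rw [hV, mul_one]
      _ = (FractionalIdeal.spanSingleton (nonZeroDivisors D) x * ↑I) * V := by
          rw [mul_assoc]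
      _ ≤ ↑I * V := FractionalIdeal.mul_le.mpr (fun i hi j hj =>
          FractionalIdeal.mul_mem_mul (hle hi) hj)
      _ = 1 := hV
  have hx1 : x ∈ (1 : FractionalIdeal (nonZeroDivisors D) (FractionRing D)) :=
    hfin (FractionalIdeal.mem_spanSingleton_self _ x)
  exact (FractionalIdeal.mem_one_iff _).mp hx1


lemma dirB (hpr : IsPruferDom D) : IsQuasiPrufer D := by
  classical
  intro P hP Q hQ hQP
  have hinj : Function.Injective (algebraMap D (FractionRing D)) :=
    IsFractionRing.injective D (FractionRing D)
  refine le_antisymm ?_ Ideal.map_comap_le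
  intro f hf
  rw [Ideal.mem_map_C_iff]
  by_cases hf0 : f = 0
  · intro k; simp [hf0]
  suffices hgoal : ∀ k, (C (f.coeff k) : D[X]) ∈ Q by
    intro k; rw [Ideal.mem_comap]; exact hgoal k
  set I : Ideal D := Ideal.span (f.coeff '' Set.Iic f.natDegree) with hIdef
  have hIfg : I.FG := Submodule.fg_span ((Set.finite_Iic _).image _)
  have hcmem : ∀ k, f.coeff k ∈ I := by
    intro k
    by_cases h : k ≤ f.natDegree
    · exact Ideal.subset_span ⟨k, h, rfl⟩
    · rw [f.coeff_eq_zero_of_natDegree_lt (not_le.mp h)]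
      exact I.zero_mem
  have hI0 : I ≠ ⊥ := by
    intro h
    apply hf0
    have := hcmem f.natDegree
    rw [h, Ideal.mem_bot] at this
    exact Polynomial.leadingCoeff_eq_zero.mp this
  have hu := hpr I hI0 hIfg
  have hI0f : (I : FractionalIdeal (nonZeroDivisors D) (FractionRing D)) ≠ 0 :=
    fun h => hI0 (FractionalIdeal.coeIdeal_eq_zero.mp h)
  have hone : (I : FractionalIdeal (nonZeroDivisors D) (FractionRing D)) * (1 / ↑I) = 1 :=
    FractionalIdeal.mul_div_self_cancel_iff.mpr ⟨↑hu.unit⁻¹, hu.mul_val_inv⟩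
  -- given n in 1/I and w in I, the product algebraMap w * n is an element of D
  have hprod : ∀ (nn : FractionRing D),
      nn ∈ (1 / (I : FractionalIdeal (nonZeroDivisors D) (FractionRing D)) :
        FractionalIdeal (nonZeroDivisors D) (FractionRing D)) →
      ∀ w ∈ I, ∃ e : D, algebraMap D (FractionRing D) e
        = algebraMap D (FractionRing D) w * nn := by
    intro nn hnn w hw
    have h1 := (FractionalIdeal.mem_div_iff_of_ne_zero hI0f).mp hnn
      (algebraMap D (FractionRing D) w)
      ((FractionalIdeal.mem_coeIdeal _).mpr ⟨w, hw, rfl⟩)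
    obtain ⟨e, he⟩ := (FractionalIdeal.mem_one_iff _).mp h1
    exact ⟨e, by rw [he, mul_comm]⟩
  -- the central argument
  have hTheta : ∀ (nn : FractionRing D),
      nn ∈ (1 / (I : FractionalIdeal (nonZeroDivisors D) (FractionRing D)) :
        FractionalIdeal (nonZeroDivisors D) (FractionRing D)) →
      ∀ w ∈ I, ∀ e : D, algebraMap D (FractionRing D) e
        = algebraMap D (FractionRing D) w * nn →
      (e ∈ P ∨ ∀ k, (C (f.coeff k) : D[X]) ∈ Q) := by
    intro nn hnn w hw
    rw [hIdef] at hw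
    refine Submodule.span_induction ?_ ?_ ?_ ?_ hw
    · -- generators: w = f.coeff i for some i ≤ natDegree
      rintro _ ⟨i, _, rfl⟩ e he
      by_cases heP : e ∈ P
      · exact Or.inl heP
      refine Or.inr ?_
      -- choose preimages for every coefficient
      have hex : ∀ j : ℕ, ∃ ej : D, algebraMap D (FractionRing D) ej
          = algebraMap D (FractionRing D) (f.coeff j) * nn :=
        fun j => hprod nn hnn _ (hcmem j)
      choose ef hef using hex
      have hefi : ef i = e := hinj (by rw [hef i, he])
      set g : D[X] := ∑ j ∈ f.support, C (ef j) * X ^ j with hg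
      have hgcoeff : ∀ j, g.coeff j = if j ∈ f.support then ef j else 0 := by
        intro j
        rw [hg, finset_sum_coeff]
        have hterm : ∀ x ∈ f.support, (C (ef x) * X ^ x).coeff j
            = if x = j then ef x else 0 := by
          intro x _
          rw [coeff_C_mul, coeff_X_pow]
          by_cases h : x = j
          · subst h; simp
          · simp [h, Ne.symm h]
        rw [Finset.sum_congr rfl hterm, Finset.sum_ite_eq' f.support j ef]
      have hisupp : i ∈ f.support := by
        rw [Polynomial.mem_support_iff]
        intro h0
        apply heP
        have : e = 0 := hinj (by rw [he, h0, map_zero, zero_mul])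
        rw [this]; exact P.zero_mem
      have hgQ : g ∉ Q := by
        intro hgQ
        have := hQP hgQ
        rw [Ideal.mem_map_C_iff] at this
        have hgi := this i
        rw [hgcoeff i, if_pos hisupp, hefi] at hgi
        exact heP hgi
      intro k
      have hkey : (C (f.coeff k) : D[X]) * g = C (ef k) * f := by
        ext j
        rw [coeff_C_mul, coeff_C_mul, hgcoeff j]
        by_cases hjs : j ∈ f.support
        · rw [if_pos hjs]
          apply hinj
          rw [map_mul, map_mul, hef j, hef k]
          ring
        · rw [if_neg hjs, Polynomial.notMem_support_iff.mp hjs]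
          ring
      have hmemQ : (C (f.coeff k) : D[X]) * g ∈ Q := by
        rw [hkey]
        exact Q.mul_mem_left _ hf
      rcases hQ.mem_or_mem hmemQ with h | h
      · exact h
      · exact absurd h hgQ
    · -- zero
      intro e he
      left
      have : e = 0 := hinj (by rw [he, map_zero, zero_mul])
      rw [this]; exact P.zero_mem
    · -- addition
      intro w1 w2 hw1 hw2 ih1 ih2 e he
      obtain ⟨e1, he1⟩ := hprod nn hnn w1 (by rw [hIdef]; exact hw1)
      obtain ⟨e2, he2⟩ := hprod nn hnn w2 (by rw [hIdef]; exact hw2)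
      have : e = e1 + e2 := hinj (by rw [he, map_add, map_add, he1, he2, add_mul])
      rcases ih1 e1 he1 with h1 | h1
      · rcases ih2 e2 he2 with h2 | h2
        · left; rw [this]; exact P.add_mem h1 h2
        · exact Or.inr h2
      · exact Or.inr h1
    · -- smul
      intro d w hwmem ih e he
      obtain ⟨e', he'⟩ := hprod nn hnn w (by rw [hIdef]; exact hwmem)
      have : e = d * e' := by
        apply hinj
        rw [he, map_mul, he', smul_eq_mul, map_mul]
        ring
      rcases ih e' he' with h | h
      · left; rw [this]; exact P.mul_mem_left d h
      · exact Or.inr h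
  -- 1 is in the submodule product
  have h1mem : (1 : FractionRing D) ∈
      ((I : FractionalIdeal (nonZeroDivisors D) (FractionRing D)) :
        Submodule D (FractionRing D)) *
      ((1 / (I : FractionalIdeal (nonZeroDivisors D) (FractionRing D)) :
        FractionalIdeal (nonZeroDivisors D) (FractionRing D)) :
        Submodule D (FractionRing D)) := by
    rw [← FractionalIdeal.coe_mul, hone]
    exact FractionalIdeal.mem_coe.mpr (FractionalIdeal.one_mem_one _)
  have hPsi : ∃ d : D, algebraMap D (FractionRing D) d = 1 ∧
      (d ∈ P ∨ ∀ k, (C (f.coeff k) : D[X]) ∈ Q) := by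
    refine Submodule.mul_induction_on h1mem ?_ ?_
    · intro m hm nn hnn
      obtain ⟨w, hw, rfl⟩ := (FractionalIdeal.mem_coeIdeal _).mp
        (FractionalIdeal.mem_coe.mp hm)
      obtain ⟨e, he⟩ := hprod nn (FractionalIdeal.mem_coe.mp hnn) w hw
      exact ⟨e, he, hTheta nn (FractionalIdeal.mem_coe.mp hnn) w hw e he⟩
    · rintro x y ⟨d1, hd1, hor1⟩ ⟨d2, hd2, hor2⟩
      refine ⟨d1 + d2, by rw [map_add, hd1, hd2], ?_⟩
      rcases hor1 with h1 | h1
      · rcases hor2 with h2 | h2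
        · exact Or.inl (P.add_mem h1 h2)
        · exact Or.inr h2
      · exact Or.inr h1
  obtain ⟨d, hd, hor⟩ := hPsi
  have hd1 : d = 1 := hinj (by rw [hd, map_one])
  rcases hor with h | h
  · exact absurd (hd1 ▸ h) (fun h1 => hP.ne_top (Ideal.eq_top_of_isUnit_mem P h1 isUnit_one))
  · exact h


lemma dirC [IsIntegrallyClosed D] (hqp : IsQuasiPrufer D) : IsPruferDom D := by
  classical
  intro I hI0 hIfg
  set K := FractionRing D with hK
  set J : FractionalIdeal (nonZeroDivisors D) K := ↑I with hJdef
  have hJ0 : J ≠ 0 := fun h => hI0 (FractionalIdeal.coeIdeal_eq_zero.mp h)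
  suffices hone : J * (1 / J) = 1 by exact isUnit_iff_exists_inv.mpr ⟨_, hone⟩
  set T₀ : Ideal D := Submodule.comap (Algebra.linearMap D K) ↑(J * (1 / J)) with hT₀
  have hmemT₀ : ∀ d : D, d ∈ T₀ ↔ algebraMap D K d ∈ J * (1 / J) := by
    intro d
    rw [hT₀]
    simp only [Submodule.mem_comap, Algebra.linearMap_apply, FractionalIdeal.mem_coe]
  have key : ∀ (m : Ideal D), m.IsMaximal → ¬ (T₀ ≤ m) := by
    intro m hmax hle
    haveI := hmax
    haveI := valuation_at hqp m
    obtain ⟨S, hSspan⟩ := hIfg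
    have hSne : S.Nonempty := by
      rw [Finset.nonempty_iff_ne_empty]
      rintro rfl
      exact hI0 (by rw [← hSspan]; simp)
    set R := Localization.AtPrime m with hR
    have hDRinj : Function.Injective (algebraMap D R) :=
      IsLocalization.injective R m.primeCompl_le_nonZeroDivisors
    obtain ⟨g0, hg0mem, hg0⟩ := finset_exists_dvd_all (S.image (algebraMap D R))
      (hSne.image _)
    obtain ⟨aj, hajS, rfl⟩ := Finset.mem_image.mp hg0mem
    have haj0 : aj ≠ 0 := by
      rintro rfl
      apply hI0
      rw [← hSspan]
      rw [eq_bot_iff, Ideal.span_le]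
      intro i hi
      obtain ⟨c, hc⟩ := hg0 (algebraMap D R i) (Finset.mem_image_of_mem _ hi)
      rw [map_zero, zero_mul] at hc
      have : i = (0 : D) := hDRinj (by rw [hc, map_zero])
      simp [this]
    have hstep : ∀ i ∈ S, ∃ s, s ∈ m.primeCompl ∧ ∃ r, s * i = r * aj := by
      intro i hi
      obtain ⟨c, hc⟩ := hg0 (algebraMap D R i) (Finset.mem_image_of_mem _ hi)
      obtain ⟨⟨r, s⟩, hrs⟩ := IsLocalization.mk'_surjective m.primeCompl c
      dsimp only at hrs
      have : algebraMap D R ((s : D) * i) = algebraMap D R (r * aj) := by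
        rw [map_mul, map_mul, hc, ← hrs]
        calc (algebraMap D R) (s : D) * ((algebraMap D R) aj * IsLocalization.mk' R r s)
            = (algebraMap D R) aj * (IsLocalization.mk' R r s * (algebraMap D R) (s : D)) := by
              ring
          _ = (algebraMap D R) aj * (algebraMap D R) r := by rw [IsLocalization.mk'_spec]
          _ = (algebraMap D R) r * (algebraMap D R) aj := by ring
      obtain ⟨c', hc'⟩ := (IsLocalization.eq_iff_exists m.primeCompl R).mp this
      exact ⟨c' * s, m.primeCompl.mul_mem c'.2 s.2, c' * r, by
        rw [mul_assoc, mul_assoc]; exact hc'⟩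
    choose! sf hsf rf hrf using hstep
    set stot := ∏ i ∈ S, sf i with hstot
    have hstotmem : stot ∈ m.primeCompl := Submonoid.prod_mem _ fun i hi => hsf i hi
    have claim : ∀ w ∈ I, ∃ t : D, stot * w = t * aj := by
      intro w hw
      rw [← hSspan] at hw
      refine Submodule.span_induction ?_ ?_ ?_ ?_ hw
      · intro i hi
        refine ⟨(∏ x ∈ S.erase i, sf x) * rf i, ?_⟩
        have hsplit : sf i * ∏ x ∈ S.erase i, sf x = stot :=
          Finset.mul_prod_erase S sf hi
        calc stot * i = (∏ x ∈ S.erase i, sf x) * (sf i * i) := by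
              rw [← hsplit]; ring
          _ = (∏ x ∈ S.erase i, sf x) * (rf i * aj) := by rw [hrf i hi]
          _ = (∏ x ∈ S.erase i, sf x) * rf i * aj := by ring
      · exact ⟨0, by ring⟩
      · rintro x y _ _ ⟨t1, ht1⟩ ⟨t2, ht2⟩
        exact ⟨t1 + t2, by rw [mul_add, ht1, ht2]; ring⟩
      · rintro d x _ ⟨t, ht⟩
        refine ⟨d * t, ?_⟩
        rw [smul_eq_mul]
        calc stot * (d * x) = d * (stot * x) := by ring
          _ = d * (t * aj) := by rw [ht]
          _ = d * t * aj := by ring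
    have hajK : algebraMap D K aj ≠ 0 := by
      simpa using (map_ne_zero_iff _ (IsFractionRing.injective D K)).mpr haj0
    set y : K := algebraMap D K stot * (algebraMap D K aj)⁻¹ with hy
    have hymem : y ∈ (1 / J : FractionalIdeal (nonZeroDivisors D) K) := by
      rw [FractionalIdeal.mem_div_iff_of_ne_zero hJ0]
      intro z hz
      obtain ⟨w, hwI, rfl⟩ := (FractionalIdeal.mem_coeIdeal _).mp hz
      obtain ⟨t, ht⟩ := claim w hwI
      have : y * algebraMap D K w = algebraMap D K t := by
        rw [hy]
        rw [mul_comm (algebraMap D K stot), mul_assoc, ← map_mul, ht, map_mul]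
        rw [mul_comm (algebraMap D K t) (algebraMap D K aj), inv_mul_cancel_left₀ hajK]
      rw [this]
      exact FractionalIdeal.coe_mem_one _ t
    have hsmem : algebraMap D K stot ∈ J * (1 / J) := by
      have hajJ : algebraMap D K aj ∈ J := by
        rw [hJdef]
        exact (FractionalIdeal.mem_coeIdeal _).mpr
          ⟨aj, by rw [← hSspan]; exact Ideal.subset_span hajS, rfl⟩
      have : algebraMap D K stot = algebraMap D K aj * y := by
        rw [hy, mul_comm (algebraMap D K stot), ← mul_assoc,
          mul_inv_cancel₀ hajK, one_mul]
      rw [this]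
      exact FractionalIdeal.mul_mem_mul hajJ hymem
    exact hstotmem (hle ((hmemT₀ stot).mpr hsmem))
  have hT₀top : T₀ = ⊤ := by
    by_contra h
    obtain ⟨m, hmax, hle⟩ := Ideal.exists_le_maximal T₀ h
    exact key m hmax hle
  have h1 : (1 : K) ∈ J * (1 / J) := by
    have := (hmemT₀ 1).mp (hT₀top ▸ Submodule.mem_top)
    rwa [map_one] at this
  refine le_antisymm FractionalIdeal.mul_one_div_le_one ?_
  intro x hx
  obtain ⟨d, rfl⟩ := FractionalIdeal.mem_one_iff _ |>.mp hx
  have := Submodule.smul_mem (↑(J * (1 / J)) : Submodule D K) d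
    (FractionalIdeal.mem_coe.mpr h1)
  rw [Algebra.smul_def, mul_one] at this
  exact FractionalIdeal.mem_coe.mp this

end Aux

/-- An integral domain `D` is a Prüfer domain iff it is integrally closed
in its fraction field and quasi-Prüfer. -/
theorem statement_0 (D : Type*) [CommRing D] [IsDomain D] :
    IsPruferDom D ↔ IsIntegrallyClosed D ∧ IsQuasiPrufer D := by
  constructor
  · intro h
    exact ⟨dirA h, dirB h⟩
  · rintro ⟨h1, h2⟩
    haveI := h1
    exact dirC h2
end

section
/- If D is a quasi-Prüfer domain, then every overring T of D (ring with D ⊆ T ⊆ K, the fraction field of D) is also quasi-Prüfer. -/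
set_option synthInstance.maxHeartbeats 1000000
set_option maxHeartbeats 1000000

open Polynomial

/-- The subfield of a field `L` consisting of ratios of elements in the image of `δ : D → L`. -/
def ratioSubfield {D L : Type*} [CommRing D] [Field L] (δ : D →+* L) : Subfield L where
  carrier := {z | ∃ a b : D, δ b ≠ 0 ∧ z * δ b = δ a}
  zero_mem' := ⟨0, 1, by simp, by simp⟩
  one_mem' := ⟨1, 1, by simp, by simp⟩
  add_mem' := by
    rintro z₁ z₂ ⟨a₁, b₁, hb₁, h₁⟩ ⟨a₂, b₂, hb₂, h₂⟩
    refine ⟨a₁ * b₂ + a₂ * b₁, b₁ * b₂, by simp [mul_ne_zero hb₁ hb₂], ?_⟩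
    have : (z₁ + z₂) * δ (b₁ * b₂) = (z₁ * δ b₁) * δ b₂ + (z₂ * δ b₂) * δ b₁ := by
      rw [map_mul]; ring
    rw [this, h₁, h₂, map_add, map_mul, map_mul]
  neg_mem' := by
    rintro z ⟨a, b, hb, hz⟩
    exact ⟨-a, b, hb, by rw [neg_mul, hz, map_neg]⟩
  mul_mem' := by
    rintro z₁ z₂ ⟨a₁, b₁, hb₁, h₁⟩ ⟨a₂, b₂, hb₂, h₂⟩
    refine ⟨a₁ * a₂, b₁ * b₂, by simp [mul_ne_zero hb₁ hb₂], ?_⟩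
    have : z₁ * z₂ * δ (b₁ * b₂) = (z₁ * δ b₁) * (z₂ * δ b₂) := by rw [map_mul]; ring
    rw [this, h₁, h₂, map_mul]
  inv_mem' := by
    intro z hz
    obtain ⟨a, b, hb, hzab⟩ := hz
    by_cases hz0 : z = 0
    · exact ⟨0, 1, by simp, by simp [hz0]⟩
    · have ha : δ a ≠ 0 := by
        rw [← hzab]; exact mul_ne_zero hz0 hb
      refine ⟨b, a, ha, ?_⟩
      field_simp [hz0] at hzab ⊢
      rw [← hzab]

theorem mem_ratioSubfield {D L : Type*} [CommRing D] [Field L] (δ : D →+* L) (d : D) :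
    δ d ∈ ratioSubfield δ := ⟨d, 1, by simp, by simp⟩


/-- If `z` is a root of a polynomial over `D` (pushed to `L` via `δ`) with some coefficient
having nonzero image, then `z` is integral over the ratio subfield of `δ`. -/
theorem isIntegral_ratioSubfield {D L : Type*} [CommRing D] [Field L] (δ : D →+* L) (z : L)
    (g : Polynomial D) (hg : Polynomial.eval₂ δ z g = 0) (m : ℕ) (hm : δ (g.coeff m) ≠ 0) :
    IsIntegral (ratioSubfield δ) z := by
  classical
  let F := ratioSubfield δ
  let δF : D →+* F := δ.codRestrict F (mem_ratioSubfield δ)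
  have hδF : (algebraMap F L).comp δF = δ := by ext d; rfl
  refine IsAlgebraic.isIntegral ⟨g.map δF, ?_, ?_⟩
  · intro hzero
    apply hm
    have h3 : δ (g.coeff m) = (((g.map δF).coeff m : F) : L) := by
      rw [Polynomial.coeff_map]; rfl
    rw [h3, hzero]
    simp
  · rw [Polynomial.aeval_def, Polynomial.eval₂_map, hδF]
    exact hg

/-- If every `D`-polynomial (via `δ`) vanishing at `x` has all its coefficients killed by `δ`,
then `x` is transcendental over the ratio subfield of `δ`. -/
theorem not_isAlgebraic_ratioSubfield {D L : Type*} [CommRing D] [Field L] (δ : D →+* L)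
    (x : L) (claim1 : ∀ g : Polynomial D, Polynomial.eval₂ δ x g = 0 → ∀ n, δ (g.coeff n) = 0) :
    ¬ IsAlgebraic (ratioSubfield δ) x := by
  classical
  rintro ⟨p, hp0, hpev⟩
  choose a b hb hab using fun i : ℕ => (p.coeff i).2
  let s := p.support
  let g : Polynomial D := ∑ i ∈ s, Polynomial.C (a i * ∏ j ∈ s.erase i, b j) * Polynomial.X ^ i
  have hcoeff : ∀ i ∈ s, δ (a i * ∏ j ∈ s.erase i, b j) =
      ((p.coeff i : L)) * ∏ j ∈ s, δ (b j) := by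
    intro i hi
    rw [map_mul, map_prod, ← hab i, mul_assoc, Finset.mul_prod_erase s (fun j => δ (b j)) hi]
  have hgev : Polynomial.eval₂ δ x g = 0 := by
    rw [Polynomial.eval₂_finset_sum]
    have : ∀ i ∈ s, Polynomial.eval₂ δ x (Polynomial.C (a i * ∏ j ∈ s.erase i, b j) *
        Polynomial.X ^ i) = (∏ j ∈ s, δ (b j)) * ((p.coeff i : L) * x ^ i) := by
      intro i hi
      rw [Polynomial.eval₂_mul, Polynomial.eval₂_C, Polynomial.eval₂_X_pow, hcoeff i hi]
      ring
    rw [Finset.sum_congr rfl this, ← Finset.mul_sum]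
    have : ∑ i ∈ s, ((p.coeff i : L) * x ^ i) = Polynomial.aeval x p := by
      rw [Polynomial.aeval_def, Polynomial.eval₂_eq_sum, Polynomial.sum_def]
      rfl
    rw [this, hpev, mul_zero]
  obtain ⟨i₀, hi₀⟩ := Polynomial.support_nonempty.mpr hp0
  have hgc : g.coeff i₀ = a i₀ * ∏ j ∈ s.erase i₀, b j := by
    rw [Polynomial.finset_sum_coeff, Finset.sum_eq_single i₀]
    · rw [Polynomial.coeff_C_mul, Polynomial.coeff_X_pow, if_pos rfl, mul_one]
    · intro j hj hne
      rw [Polynomial.coeff_C_mul, Polynomial.coeff_X_pow, if_neg (fun hh => hne hh.symm),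
        mul_zero]
    · intro hni; exact absurd hi₀ hni
  have hg₀ : δ (g.coeff i₀) = 0 := claim1 g hgev i₀
  rw [hgc, hcoeff i₀ hi₀] at hg₀
  have h1 : ((p.coeff i₀ : L)) ≠ 0 := by
    intro hz
    have : p.coeff i₀ = 0 := by ext; exact hz
    exact (Polynomial.mem_support_iff.mp hi₀) this
  have h2 : (∏ j ∈ s, δ (b j)) ≠ 0 :=
    Finset.prod_ne_zero_iff.mpr fun j _ => hb j
  exact (mul_ne_zero h1 h2) hg₀

/-- If `x` satisfies a nontrivial relation whose coefficients are all integral over a subfield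
`F`, then `x` is algebraic over `F`. -/
theorem isAlgebraic_of_integral_coeffs {L : Type*} [Field L] (F : Subfield L) (x : L)
    (c : ℕ → L) (hc : ∀ i, IsIntegral F (c i)) (s : Finset ℕ)
    (hsum : ∑ i ∈ s, c i * x ^ i = 0) (n₀ : ℕ) (hn₀s : n₀ ∈ s) (hcn₀ : c n₀ ≠ 0) :
    IsAlgebraic F x := by
  classical
  let S : Set L := Set.range c
  have hSalg : ∀ z ∈ S, IsIntegral F z := by rintro z ⟨i, rfl⟩; exact hc i
  let E := IntermediateField.adjoin F S
  haveI hEalg : Algebra.IsAlgebraic F E := IntermediateField.isAlgebraic_adjoin hSalg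
  haveI : Algebra.IsIntegral F E := Algebra.IsAlgebraic.isIntegral
  have hmemE : ∀ i : ℕ, c i ∈ E := fun i => IntermediateField.subset_adjoin F S ⟨i, rfl⟩
  let fE : Polynomial E := ∑ i ∈ s, Polynomial.C (⟨c i, hmemE i⟩ : E) * Polynomial.X ^ i
  have hxE : IsIntegral E x := by
    refine IsAlgebraic.isIntegral ⟨fE, ?_, ?_⟩
    · intro hzero
      have h1 : fE.coeff n₀ = (⟨c n₀, hmemE n₀⟩ : E) := by
        rw [Polynomial.finset_sum_coeff, Finset.sum_eq_single n₀]
        · simp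
        · intro j hj hne
          rw [Polynomial.coeff_C_mul, Polynomial.coeff_X_pow, if_neg (fun hh => hne hh.symm),
            mul_zero]
        · intro hni; exact absurd hn₀s hni
      apply hcn₀
      rw [hzero] at h1
      have : (((0 : Polynomial E).coeff n₀ : E) : L) = c n₀ := by rw [h1]
      simpa using this.symm
    · have : Polynomial.aeval x fE = ∑ i ∈ s, c i * x ^ i := by
        rw [map_sum]
        refine Finset.sum_congr rfl fun i _ => ?_
        rw [map_mul, Polynomial.aeval_C, map_pow, Polynomial.aeval_X]
        rfl
      rw [this, hsum]
  have : IsIntegral F x := isIntegral_trans (A := E) x hxE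
  exact this.isAlgebraic

/-- Every overring of a quasi-Prüfer domain is quasi-Prüfer. -/
theorem statement_1 (D : Type*) [CommRing D] [IsDomain D] (h : IsQuasiPrufer D)
    (T : Subalgebra D (FractionRing D)) : IsQuasiPrufer T := by
  classical
  intro P hP Q hQ hle
  haveI := hP; haveI := hQ
  refine le_antisymm ?_ (Ideal.map_le_iff_le_comap.mpr le_rfl)
  intro f hf
  rw [Ideal.mem_map_C_iff]
  intro n₀
  rw [Ideal.mem_comap]
  by_contra hn₀
  -- Setup
  set K := FractionRing D
  let q : Ideal T := Q.comap (C : T →+* T[X])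
  have hq : q.IsPrime := Ideal.IsPrime.comap _
  let q₀ : Ideal D := q.comap (algebraMap D T)
  have hq₀ : q₀.IsPrime := Ideal.IsPrime.comap _
  let A := T[X] ⧸ Q
  haveI : IsDomain A := Ideal.Quotient.isDomain Q
  let L := FractionRing A
  let ΦT : T[X] →+* L := (algebraMap A L).comp (Ideal.Quotient.mk Q)
  let ρ : T →+* L := ΦT.comp (C : T →+* T[X])
  let δ : D →+* L := ρ.comp (algebraMap D T)
  let xL : L := ΦT X
  -- basic facts
  have hΦ0 : ∀ p : T[X], ΦT p = 0 ↔ p ∈ Q := by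
    intro p
    constructor
    · intro hp
      have h1 : (algebraMap A L) (Ideal.Quotient.mk Q p) = algebraMap A L 0 := by
        rw [map_zero]; exact hp
      have h2 := IsFractionRing.injective A L h1
      exact Ideal.Quotient.eq_zero_iff_mem.mp h2
    · intro hp
      show (algebraMap A L) (Ideal.Quotient.mk Q p) = 0
      rw [Ideal.Quotient.eq_zero_iff_mem.mpr hp, map_zero]
  have hρ0 : ∀ t : T, ρ t = 0 ↔ t ∈ q := fun t => hΦ0 (C t)
  have hδ0 : ∀ d : D, δ d = 0 ↔ d ∈ q₀ := fun d => hρ0 (algebraMap D T d)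
  have hΦeval : ∀ p : T[X], ΦT p = eval₂ ρ xL p := by
    intro p
    conv_lhs => rw [← eval₂_C_X (p := p)]
    rw [hom_eval₂]
  -- Claim 1
  have claim1 : ∀ g : D[X], eval₂ δ xL g = 0 → ∀ n, g.coeff n ∈ q₀ := by
    intro g hg
    have hmap : g.map (algebraMap D T) ∈ Q := by
      rw [← hΦ0, hΦeval, eval₂_map]
      exact hg
    let Q₀ : Ideal D[X] := Q.comap (mapRingHom (algebraMap D T))
    have hQ₀ : Q₀.IsPrime := Ideal.IsPrime.comap _
    let p₀ : Ideal D := P.comap (algebraMap D T)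
    have hp₀ : p₀.IsPrime := Ideal.IsPrime.comap _
    have hQ₀le : Q₀ ≤ p₀.map (C : D →+* D[X]) := by
      intro g' hg'
      rw [Ideal.mem_map_C_iff]
      intro n
      rw [Ideal.mem_comap]
      have : (g'.map (algebraMap D T)).coeff n ∈ P := by
        have := hle (Ideal.mem_comap.mp hg')
        exact Ideal.mem_map_C_iff.mp this n
      rwa [Polynomial.coeff_map] at this
    have hres := h p₀ hp₀ Q₀ hQ₀ hQ₀le
    have hcomap : Q₀.comap (C : D →+* D[X]) = q₀ := by
      ext d
      simp only [Ideal.mem_comap]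
      show (C d).map (algebraMap D T) ∈ Q ↔ _
      rw [Polynomial.map_C]
      rfl
    have hgQ₀ : g ∈ Q₀ := Ideal.mem_comap.mpr hmap
    rw [hres, hcomap] at hgQ₀
    exact Ideal.mem_map_C_iff.mp hgQ₀
  -- The base field F
  let F : Subfield L := ratioSubfield δ
  -- Claim 2 : every ρ t is integral over F
  have claim2 : ∀ t : T, IsIntegral F (ρ t) := by
    intro t
    obtain ⟨⟨a, c⟩, hc⟩ := IsLocalization.surj (nonZeroDivisors D) ((t : K))
    have hcne : (c : D) ≠ 0 := nonZeroDivisors.ne_zero c.2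
    let ev : D[X] →+* K := eval₂RingHom (algebraMap D K) (t : K)
    let Q₄ : Ideal D[X] := RingHom.ker ev
    have hQ₄ : Q₄.IsPrime := RingHom.ker_isPrime ev
    let w : D[X] := C (c : D) * X - C a
    have hwQ₄ : w ∈ Q₄ := by
      show ev w = 0
      simp only [ev, w, map_sub, map_mul, coe_eval₂RingHom, eval₂_C, eval₂_X]
      rw [mul_comm, hc]
      ring
    have hwne : w ≠ 0 := fun hw => by
      have : w.coeff 1 = (c : D) := by simp [w, coeff_C]
      rw [hw] at this
      exact hcne (by simpa using this.symm)
    have hQ₄comap : Q₄.comap (C : D →+* D[X]) = ⊥ := by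
      ext d
      simp only [Ideal.mem_comap, Ideal.mem_bot]
      constructor
      · intro hd
        have : ev (C d) = 0 := hd
        simp only [ev, coe_eval₂RingHom, eval₂_C] at this
        exact IsFractionRing.injective D K (by simpa using this)
      · rintro rfl; simp only [map_zero]; exact (RingHom.ker ev).zero_mem
    have hex : ∃ g : D[X], eval₂ (algebraMap D K) (t : K) g = 0 ∧ ∃ m, g.coeff m ∉ q₀ := by
      by_contra hcon
      push_neg at hcon
      have hQ₄le : Q₄ ≤ q₀.map (C : D →+* D[X]) := by
        intro g hg
        rw [Ideal.mem_map_C_iff]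
        exact hcon g hg
      have := h q₀ hq₀ Q₄ hQ₄ hQ₄le
      rw [hQ₄comap, Ideal.map_bot] at this
      rw [this] at hwQ₄
      exact hwne (Ideal.mem_bot.mp hwQ₄)
    obtain ⟨g, hgev, m, hm⟩ := hex
    have hevT : eval₂ (algebraMap D T) t g = 0 := by
      have hcomp : (algebraMap T K).comp (algebraMap D T) = algebraMap D K := by
        ext d; exact rfl
      have h5 : algebraMap T K (eval₂ (algebraMap D T) t g) = 0 := by
        rw [hom_eval₂, hcomp]
        exact hgev
      have hinj : Function.Injective (algebraMap T K) := fun x y hxy => Subtype.ext hxy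
      exact (map_eq_zero_iff _ hinj).mp h5
    have hevL : eval₂ δ (ρ t) g = 0 := by
      have h6 : ρ (eval₂ (algebraMap D T) t g) = eval₂ (ρ.comp (algebraMap D T)) (ρ t) g :=
        hom_eval₂ _ _ _ _
      rw [hevT, map_zero] at h6
      exact h6.symm
    exact isIntegral_ratioSubfield δ (ρ t) g hevL m (fun hz => hm ((hδ0 _).mp hz))
  -- xL is transcendental over F
  have htrans : ¬ IsAlgebraic F xL :=
    not_isAlgebraic_ratioSubfield δ xL fun g hg n => (hδ0 _).mpr (claim1 g hg n)
  apply htrans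
  refine isAlgebraic_of_integral_coeffs F xL (fun i => ρ (f.coeff i)) (fun i => claim2 _)
    f.support ?_ n₀ ?_ ?_
  · have hΦf : ΦT f = 0 := (hΦ0 f).mpr hf
    rw [hΦeval, eval₂_eq_sum, sum_def] at hΦf
    exact hΦf
  · rw [Polynomial.mem_support_iff]
    intro hz
    exact hn₀ (by rw [hz, Polynomial.C_0]; exact Q.zero_mem)
  · exact fun hz => hn₀ ((hρ0 _).mp hz)
end

section
/- If every overring of the quasilocal domain D has the property that the residue field extension induced by every prime in an overring is algebraic over the residue field of the corresponding contraction in D, and D is quasi-Prüfer, then every localization D_P of D at a prime P is quasi-Prüfer. -/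
set_option synthInstance.maxHeartbeats 1000000
set_option maxHeartbeats 1000000

open Polynomial

/-- If every overring of the quasilocal domain `D` has algebraic residue field
extensions over the contractions to `D`, and `D` is quasi-Prüfer, then every localization
`D_P` at a prime `P` is quasi-Prüfer. -/
theorem statement_3 (D : Type*) [CommRing D] [IsDomain D] [IsLocalRing D]
    (hres : ∀ T : Subalgebra D (FractionRing D), ∀ Q : Ideal T, Q.IsPrime →
      ∀ x : ↥T ⧸ Q, ∃ p : Polynomial (D ⧸ Q.comap (algebraMap D ↥T)), p ≠ 0 ∧
        Polynomial.eval₂ (Ideal.quotientMap Q (algebraMap D ↥T) le_rfl) x p = 0)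
    (hqp : IsQuasiPrufer D) (P : Ideal D) [P.IsPrime] :
    IsQuasiPrufer (Localization.AtPrime P) := by
  intro P' hP' Q' hQ' hle
  set f : D →+* Localization.AtPrime P := algebraMap D (Localization.AtPrime P)
  set φ : D[X] →+* (Localization.AtPrime P)[X] := Polynomial.mapRingHom f
  have hφC : ∀ d : D, φ (C d) = C (f d) := fun d => Polynomial.map_C f
  set Q₀ : Ideal D[X] := Q'.comap φ
  have hQ₀ : Q₀.IsPrime := Ideal.comap_isPrime φ Q'
  set P₀ : Ideal D := P'.comap f
  have hP₀ : P₀.IsPrime := Ideal.comap_isPrime f P'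
  have hQ₀le : Q₀ ≤ P₀.map (C : D →+* D[X]) := by
    intro q hq
    rw [Ideal.mem_map_C_iff]
    intro n
    have h1 : φ q ∈ P'.map (C : _ →+* _) := hle hq
    have h2 := (Ideal.mem_map_C_iff).mp h1 n
    exact Ideal.mem_comap.mpr (by simpa only [φ, Polynomial.coe_mapRingHom, Polynomial.coeff_map] using h2)
  have key : Q₀ = (Q₀.comap (C : D →+* D[X])).map (C : D →+* D[X]) :=
    hqp P₀ hP₀ Q₀ hQ₀ hQ₀le
  refine le_antisymm ?_ (Ideal.map_comap_le)
  intro g hg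
  rw [Ideal.mem_map_C_iff]
  intro n
  -- clear denominators
  obtain ⟨b, hb⟩ : ∃ b : P.primeCompl, ∀ i, algebraMap D (Localization.AtPrime P)
      ((IsLocalization.integerNormalization P.primeCompl g).coeff i) = (b : D) • g.coeff i := by
    obtain ⟨b, hbM, hbeq⟩ := IsLocalization.integerNormalization_spec P.primeCompl g
    exact ⟨⟨b, hbM⟩, fun i => by rw [← Polynomial.coeff_map, hbeq, Polynomial.coeff_smul]⟩
  set g₀ : D[X] := IsLocalization.integerNormalization P.primeCompl g
  have hunit : IsUnit (f (b : D)) := IsLocalization.map_units (M := P.primeCompl) (Localization.AtPrime P) b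
  have hφg₀ : φ g₀ = C (f (b : D)) * g := by
    ext i
    simp only [φ, Polynomial.coe_mapRingHom, Polynomial.coeff_map, Polynomial.coeff_C_mul]
    rw [show f (g₀.coeff i) = (b : D) • g.coeff i from hb i, Algebra.smul_def]
  have hg₀ : g₀ ∈ Q₀ := by
    show φ g₀ ∈ Q'
    rw [hφg₀]
    exact Ideal.mul_mem_left _ _ hg
  rw [key, Ideal.mem_map_C_iff] at hg₀
  have h3 : C (g₀.coeff n) ∈ Q₀ := hg₀ n
  have h4 : φ (C (g₀.coeff n)) ∈ Q' := h3
  rw [hφC] at h4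
  have h5 : f (g₀.coeff n) = f (b : D) * g.coeff n := by
    rw [show f (g₀.coeff n) = (b : D) • g.coeff n from hb n, Algebra.smul_def]
  rw [h5, map_mul] at h4
  rcases hQ'.mem_or_mem h4 with h | h
  · exact absurd h (fun hc => hQ'.ne_top (Ideal.eq_top_of_isUnit_mem _ hc (hunit.map C)))
  · exact h
end

section
/- If D is a strong S-domain of finite Krull dimension, then dim(D[X]) = dim(D) + 1. -/
set_option synthInstance.maxHeartbeats 1000000
set_option maxHeartbeats 1000000

open Polynomial

section StrongSAux
set_option linter.unusedVariables false
set_option linter.unusedSectionVars false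
open Order

private lemma pseudoDiv' {A : Type*} [CommRing A] [IsDomain A] (g : A[X]) (hg : g ≠ 0) :
    ∀ n (f : A[X]), f.natDegree ≤ n → ∃ (k : ℕ) (q r : A[X]),
      C g.leadingCoeff ^ k * f = q * g + r ∧ r.degree < g.degree := by
  intro n
  induction n using Nat.strong_induction_on with
  | _ n ih =>
    intro f hf
    by_cases hfg : f.degree < g.degree
    · exact ⟨0, 0, f, by ring, hfg⟩
    push_neg at hfg
    have hf0 : f ≠ 0 := by
      rintro rfl
      rw [degree_zero, le_bot_iff, degree_eq_bot] at hfg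
      exact hg hfg
    have ha : g.leadingCoeff ≠ 0 := leadingCoeff_ne_zero.mpr hg
    have hb : f.leadingCoeff ≠ 0 := leadingCoeff_ne_zero.mpr hf0
    set a := g.leadingCoeff with ha_def
    set b := f.leadingCoeff with hb_def
    set d := f.natDegree - g.natDegree with hd_def
    have hdeg_le : g.natDegree ≤ f.natDegree := natDegree_le_natDegree hfg
    set f' := C a * f - C b * X ^ d * g with hf'_def
    have hdeg1 : (C b * X ^ d * g).degree = f.degree := by
      rw [degree_mul, degree_mul, degree_C hb, degree_X_pow, degree_eq_natDegree hg,
        degree_eq_natDegree hf0, zero_add]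
      rw [← Nat.cast_add, Nat.sub_add_cancel hdeg_le]
    have hdeg2 : (C a * f).degree = f.degree := by
      rw [degree_mul, degree_C ha, zero_add]
    have key : f'.degree < f.degree := by
      have := degree_sub_lt (hdeg2.trans hdeg1.symm) (mul_ne_zero (fun h => ha (by
        simpa using congrArg (fun p => p.coeff 0) h)) hf0) (by
        rw [leadingCoeff_mul, leadingCoeff_mul, leadingCoeff_mul, leadingCoeff_C,
          leadingCoeff_C, leadingCoeff_X_pow, mul_one, mul_comm])
      rw [← hf'_def] at this
      rwa [hdeg2] at this
    by_cases hf'0 : f' = 0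
    · have hgb : (0 : A[X]).degree < g.degree := by
        rw [degree_zero]
        exact bot_lt_iff_ne_bot.mpr (fun hb2 => hg (degree_eq_bot.mp hb2))
      have h0 : C a * f - C b * X ^ d * g = 0 := hf'0
      exact ⟨1, C b * X ^ d, 0, by linear_combination h0, hgb⟩
    · have hlt : f'.natDegree < f.natDegree := natDegree_lt_natDegree hf'0 key
      obtain ⟨k, q, r, heq, hr⟩ := ih f'.natDegree (lt_of_lt_of_le hlt hf) f' le_rfl
      refine ⟨k + 1, q + C a ^ k * (C b * X ^ d), r, ?_, hr⟩
      have h1 : C a * f = f' + C b * X ^ d * g := by rw [hf'_def]; ring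
      linear_combination (C a) ^ k * h1 + heq


private lemma KL0 {A : Type*} [CommRing A] [IsDomain A] {Q' Q : Ideal A[X]}
    (hQ' : Q'.IsPrime) (hQ : Q.IsPrime) (hle : Q' ≤ Q)
    (hQc : Q.comap (C : A →+* A[X]) = ⊥) (hne : Q' ≠ ⊥) : Q' = Q := by
  classical
  have hconst : ∀ x : A, C x ∈ Q → x = 0 := by
    intro x hx
    have : x ∈ Q.comap (C : A →+* A[X]) := hx
    rwa [hQc] at this
  -- minimal degree nonzero element of Q
  obtain ⟨g0, hg0Q, hg0ne⟩ := (Submodule.ne_bot_iff Q').mp hne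
  have hP : ∃ n, ∃ g, g ∈ Q ∧ g ≠ 0 ∧ g.natDegree = n := ⟨g0.natDegree, g0, hle hg0Q, hg0ne, rfl⟩
  obtain ⟨g, hgQ, hgne, hgdeg⟩ := Nat.find_spec hP
  have hgmin : ∀ s, s ∈ Q → s ≠ 0 → g.natDegree ≤ s.natDegree := by
    intro s hs hsne
    rw [hgdeg]
    exact Nat.find_min' hP ⟨s, hs, hsne, rfl⟩
  have ha : g.leadingCoeff ≠ 0 := leadingCoeff_ne_zero.mpr hgne
  have hCane : ∀ k : ℕ, (C g.leadingCoeff) ^ k ∉ Q' := by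
    intro k hk
    exact ha (hconst _ (hle (hQ'.mem_of_pow_mem k hk)))
  have hstep : ∀ f ∈ Q, ∃ (k : ℕ) (q : A[X]), C g.leadingCoeff ^ k * f = q * g := by
    intro f hf
    obtain ⟨k, q, r, heq, hr⟩ := pseudoDiv' g hgne f.natDegree f le_rfl
    have hrQ : r ∈ Q := by
      have : r = C g.leadingCoeff ^ k * f - q * g := by linear_combination -heq
      rw [this]
      exact Ideal.sub_mem Q (Q.mul_mem_left _ hf) (Q.mul_mem_left _ hgQ)
    by_cases hr0 : r = 0
    · exact ⟨k, q, by rw [hr0, add_zero] at heq; exact heq⟩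
    · exact absurd (hgmin r hrQ hr0) (Nat.not_le.mpr (natDegree_lt_natDegree hr0
        (hr.trans_le (degree_le_natDegree.trans (le_of_eq (by rw [degree_eq_natDegree hgne]))))))
  have hgdeg1 : 1 ≤ g.natDegree := by
    by_contra hcon
    push_neg at hcon
    interval_cases hd : g.natDegree
    · have hc0 : g = C (g.coeff 0) := Polynomial.eq_C_of_natDegree_eq_zero hd
      have h0 : g.coeff 0 = 0 := hconst _ (hc0 ▸ hgQ)
      exact hgne (by rw [hc0, h0, map_zero])
  have hgQ' : g ∈ Q' := by
    by_contra hgnot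
    -- minimal degree nonzero element of Q'
    have hP' : ∃ n, ∃ s, s ∈ Q' ∧ s ≠ 0 ∧ s.natDegree = n := ⟨g0.natDegree, g0, hg0Q, hg0ne, rfl⟩
    obtain ⟨h, hhQ', hhne, hhdeg⟩ := Nat.find_spec hP'
    have hhmin : ∀ s, s ∈ Q' → s ≠ 0 → h.natDegree ≤ s.natDegree := by
      intro s hs hsne
      rw [hhdeg]
      exact Nat.find_min' hP' ⟨s, hs, hsne, rfl⟩
    obtain ⟨k, q, hk⟩ := hstep h (hle hhQ')
    have hqQ' : q ∈ Q' := by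
      have hmem : q * g ∈ Q' := by rw [← hk]; exact Q'.mul_mem_left _ hhQ'
      exact (hQ'.mem_or_mem hmem).resolve_right hgnot
    have hCk : (C g.leadingCoeff) ^ k ≠ 0 := pow_ne_zero _ (fun hc => ha (by
      simpa using congrArg (fun p => p.coeff 0) hc))
    have hq0 : q ≠ 0 := by
      rintro rfl
      rw [zero_mul] at hk
      exact (mul_ne_zero hCk hhne) hk
    have hdegs : q.natDegree + g.natDegree = h.natDegree := by
      have h1 : (C g.leadingCoeff ^ k * h).natDegree = h.natDegree := by
        rw [natDegree_mul hCk hhne, natDegree_pow, natDegree_C, mul_zero, zero_add]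
      rw [← natDegree_mul hq0 hgne, ← hk, h1]
    have : h.natDegree ≤ q.natDegree := hhmin q hqQ' hq0
    omega
  refine le_antisymm hle ?_
  intro f hf
  obtain ⟨k, q, hk⟩ := hstep f hf
  have hmem : (C g.leadingCoeff) ^ k * f ∈ Q' := by rw [hk]; exact Q'.mul_mem_left _ hgQ'
  exact (hQ'.mem_or_mem hmem).resolve_left (hCane k)

private lemma KL {D : Type*} [CommRing D] {p : Ideal D} (hp : p.IsPrime) {Q' Q : Ideal D[X]}
    (hQ' : Q'.IsPrime) (hQ : Q.IsPrime) (hle : Q' ≤ Q)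
    (hc' : Q'.comap (C : D →+* D[X]) = p) (hc : Q.comap (C : D →+* D[X]) = p)
    (hne : Q' ≠ p.map (C : D →+* D[X])) : Q' = Q := by
  haveI := hp
  set π : D[X] →+* (D ⧸ p)[X] := mapRingHom (Ideal.Quotient.mk p) with hπ
  have hπsurj : Function.Surjective π := Polynomial.map_surjective _ Ideal.Quotient.mk_surjective
  have hker : RingHom.ker π = p.map (C : D →+* D[X]) := by
    rw [hπ, Polynomial.ker_mapRingHom, Ideal.mk_ker]
  have hkerQ' : RingHom.ker π ≤ Q' := by
    rw [hker]
    exact Ideal.map_le_iff_le_comap.mpr (le_of_eq hc'.symm)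
  have hkerQ : RingHom.ker π ≤ Q := by
    rw [hker]
    exact Ideal.map_le_iff_le_comap.mpr (le_of_eq hc.symm)
  have hQ'p : (Q'.map π).IsPrime := Ideal.map_isPrime_of_surjective hπsurj hkerQ'
  have hQp : (Q.map π).IsPrime := Ideal.map_isPrime_of_surjective hπsurj hkerQ
  have hcm' : (Q'.map π).comap π = Q' := by
    rw [Ideal.comap_map_of_surjective π hπsurj, ← RingHom.ker_eq_comap_bot,
      sup_eq_left.mpr hkerQ']
  have hcm : (Q.map π).comap π = Q := by
    rw [Ideal.comap_map_of_surjective π hπsurj, ← RingHom.ker_eq_comap_bot,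
      sup_eq_left.mpr hkerQ]
  have hcbar : (Q.map π).comap (C : (D ⧸ p) →+* (D ⧸ p)[X]) = ⊥ := by
    rw [eq_bot_iff]
    intro y hy
    obtain ⟨x, rfl⟩ := Ideal.Quotient.mk_surjective y
    have hCx : π (C x) ∈ Q.map π := by
      have : (C : (D ⧸ p) →+* (D ⧸ p)[X]) (Ideal.Quotient.mk p x) = π (C x) := by
        simp [hπ]
      rw [Ideal.mem_comap] at hy
      rwa [this] at hy
    have : C x ∈ Q := by rw [← hcm]; exact hCx
    have hxp : x ∈ p := by rw [← hc]; exact this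
    simpa using Ideal.Quotient.eq_zero_iff_mem.mpr hxp
  have hnebot : Q'.map π ≠ ⊥ := by
    intro hbot
    apply hne
    refine le_antisymm ?_ (Ideal.map_le_iff_le_comap.mpr (le_of_eq hc'.symm))
    intro x hx
    have : π x ∈ Q'.map π := Ideal.mem_map_of_mem π hx
    rw [hbot] at this
    have : x ∈ RingHom.ker π := this
    rwa [hker] at this
  have := KL0 hQ'p hQp (Ideal.map_mono hle) hcbar hnebot
  rw [← hcm', ← hcm, this]

section Spec
variable {D : Type*} [CommRing D] [IsDomain D]

private lemma comap_map_C (p : Ideal D) : (p.map (C : D →+* D[X])).comap (C : D →+* D[X]) = p := by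
  refine le_antisymm ?_ (Ideal.le_comap_map)
  intro x hx
  rw [Ideal.mem_comap, Ideal.mem_map_C_iff] at hx
  simpa using hx 0

private noncomputable def SpecPX (p : PrimeSpectrum D) : PrimeSpectrum D[X] :=
  ⟨p.asIdeal.map (C : D →+* D[X]), by have := p.isPrime; exact Ideal.isPrime_map_C_of_isPrime⟩

private noncomputable def SpecC (Q : PrimeSpectrum D[X]) : PrimeSpectrum D :=
  ⟨Q.asIdeal.comap (C : D →+* D[X]), by have := Q.isPrime; exact Ideal.IsPrime.comap _⟩

private lemma SpecC_SpecPX (p : PrimeSpectrum D) : SpecC (SpecPX p) = p := by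
  apply PrimeSpectrum.ext
  exact comap_map_C p.asIdeal

private lemma SpecPX_strictMono : StrictMono (SpecPX (D := D)) := by
  intro p q hpq
  refine lt_of_le_of_ne (Ideal.map_mono hpq.le) ?_
  intro he
  apply hpq.ne
  rw [← SpecC_SpecPX p, ← SpecC_SpecPX q]
  exact congrArg SpecC he

private lemma SpecPX_le_of_comap {p : PrimeSpectrum D} {Q : PrimeSpectrum D[X]}
    (hc : Q.asIdeal.comap (C : D →+* D[X]) = p.asIdeal) : SpecPX p ≤ Q :=
  Ideal.map_le_iff_le_comap.mpr (le_of_eq hc.symm)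

end Spec

private lemma height_add_one_le {α : Type*} [Preorder α] {x y : α} (hxy : x < y) :
    height x + 1 ≤ height y := by
  rw [height_eq_iSup_lt_height y]
  exact le_iSup₂ (f := fun z (_ : z < y) => height z + 1) x hxy

private lemma AB {D : Type*} [CommRing D] [IsDomain D] (hS : IsStrongS D)
    (hfin : ∀ p : PrimeSpectrum D, height p ≠ ⊤) :
    ∀ n : ℕ, ∀ p : PrimeSpectrum D, height p ≤ (n : ℕ∞) →
      height (SpecPX p) ≤ height p ∧
      ∀ Q : PrimeSpectrum D[X], Q.asIdeal.comap (C : D →+* D[X]) = p.asIdeal →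
        height Q ≤ height p + 1 := by
  intro n
  induction n using Nat.strong_induction_on with
  | _ n ih =>
    intro p hp
    have step : ∀ p' : PrimeSpectrum D, p' < p →
        height (SpecPX p') ≤ height p' ∧
        ∀ Q : PrimeSpectrum D[X], Q.asIdeal.comap (C : D →+* D[X]) = p'.asIdeal →
          height Q ≤ height p' + 1 := by
      intro p' hp'
      have h1 : height p' < height p :=
        height_strictMono hp' (lt_top_iff_ne_top.mpr (hfin p'))
      obtain ⟨m, hm⟩ := WithTop.ne_top_iff_exists.mp (hfin p')
      have hm' : height p' = (m : ℕ∞) := by exact_mod_cast hm.symm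
      have hmn : m < n := by
        have : (m : ℕ∞) < (n : ℕ∞) := by rw [← hm']; exact lt_of_lt_of_le h1 hp
        exact_mod_cast this
      exact ih m hmn p' (le_of_eq hm')
    -- the "succ of smaller height" fact
    have hsucc : ∀ p' : PrimeSpectrum D, p' < p → height p' + 1 ≤ height p := by
      intro p' hp'
      exact (ENat.add_one_le_iff (hfin p')).mpr
        (height_strictMono hp' (lt_top_iff_ne_top.mpr (hfin p')))
    -- case analysis helper: for Q' < something with comap landing in p strictly below
    have hA : height (SpecPX p) ≤ height p := by
      rw [height_eq_iSup_lt_height (SpecPX p)]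
      apply iSup₂_le
      intro Q' hQ'
      set p' : PrimeSpectrum D := SpecC Q' with hp'def
      have hple : p' ≤ p := by
        show Q'.asIdeal.comap (C : D →+* D[X]) ≤ p.asIdeal
        calc Q'.asIdeal.comap (C : D →+* D[X])
            ≤ (SpecPX p).asIdeal.comap (C : D →+* D[X]) := Ideal.comap_mono hQ'.le
          _ = p.asIdeal := comap_map_C p.asIdeal
      have hpne : p' ≠ p := by
        intro he
        have hle2 : (SpecPX p) ≤ Q' := SpecPX_le_of_comap (congrArg PrimeSpectrum.asIdeal he)
        exact absurd hle2 (not_le_of_gt hQ')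
      have hplt : p' < p := lt_of_le_of_ne hple hpne
      obtain ⟨hA', hB'⟩ := step p' hplt
      by_cases hcase : Q' = SpecPX p'
      · calc height Q' + 1 = height (SpecPX p') + 1 := by rw [hcase]
          _ ≤ height p' + 1 := add_le_add_left hA' 1
          _ ≤ height p := hsucc p' hplt
      · have hup : height Q' ≤ height p' + 1 := hB' Q' rfl
        have hnotadj : ¬ AdjacentPrimes p'.asIdeal p.asIdeal := by
          intro hadj
        -- strong S gives adjacency upstairs, contradicted by Q'
          obtain ⟨-, -, -, h4⟩ := hS _ _ hadj
          apply h4 Q'.asIdeal Q'.isPrime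
          · have hle3 : p'.asIdeal.map (C : D →+* D[X]) ≤ Q'.asIdeal :=
              Ideal.map_le_iff_le_comap.mpr le_rfl
            refine lt_of_le_of_ne hle3 ?_
            intro he
            exact hcase (PrimeSpectrum.ext he.symm)
          · have hle4 : Q'.asIdeal ≤ (SpecPX p).asIdeal := hQ'.le
            exact lt_of_le_of_ne hle4 (fun he => hQ'.ne (PrimeSpectrum.ext he))
        have hint : ∃ q : PrimeSpectrum D, p' < q ∧ q < p := by
          by_contra hcon
          push_neg at hcon
          have hple' : p'.asIdeal ≤ p.asIdeal := hple
          refine hnotadj ⟨p'.isPrime, p.isPrime,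
            lt_of_le_of_ne hple' (fun he => hpne (PrimeSpectrum.ext he)), ?_⟩
          intro q hq h1 h2
          have hq1 : p' < (⟨q, hq⟩ : PrimeSpectrum D) :=
            lt_of_le_of_ne h1.le (fun he => h1.ne (congrArg PrimeSpectrum.asIdeal he))
          exact (hcon _ hq1)
            (lt_of_le_of_ne h2.le (fun he => h2.ne (congrArg PrimeSpectrum.asIdeal he)))
        obtain ⟨q, h1, h2⟩ := hint
        have e1 : height p' + 1 ≤ height q := (ENat.add_one_le_iff (hfin p')).mpr
          (height_strictMono h1 (lt_top_iff_ne_top.mpr (hfin p')))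
        have e2 : height q + 1 ≤ height p := (ENat.add_one_le_iff (hfin q)).mpr
          (height_strictMono h2 (lt_top_iff_ne_top.mpr (hfin q)))
        calc height Q' + 1 ≤ (height p' + 1) + 1 := add_le_add_left hup 1
          _ ≤ height q + 1 := add_le_add_left e1 1
          _ ≤ height p := e2
    refine ⟨hA, ?_⟩
    intro Q hQc
    rw [height_eq_iSup_lt_height Q]
    apply iSup₂_le
    intro Q' hQ'
    suffices hs : height Q' ≤ height p by exact add_le_add_left hs 1
    set p' : PrimeSpectrum D := SpecC Q' with hp'def
    have hple : p' ≤ p := by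
      show Q'.asIdeal.comap (C : D →+* D[X]) ≤ p.asIdeal
      calc Q'.asIdeal.comap (C : D →+* D[X])
          ≤ Q.asIdeal.comap (C : D →+* D[X]) := Ideal.comap_mono hQ'.le
        _ = p.asIdeal := hQc
    by_cases hpe : p' = p
    · -- same contraction: KL forces Q' = SpecPX p
      have hQ'ideal : Q'.asIdeal.comap (C : D →+* D[X]) = p.asIdeal :=
        congrArg PrimeSpectrum.asIdeal hpe
      by_cases hcase : Q'.asIdeal = p.asIdeal.map (C : D →+* D[X])
      · have : Q' = SpecPX p := PrimeSpectrum.ext hcase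
        rw [this]
        exact hA
      · exfalso
        have := KL p.isPrime Q'.isPrime Q.isPrime hQ'.le hQ'ideal hQc hcase
        exact hQ'.ne (PrimeSpectrum.ext this)
    · have hplt : p' < p := lt_of_le_of_ne hple hpe
      obtain ⟨hA', hB'⟩ := step p' hplt
      by_cases hcase : Q' = SpecPX p'
      · rw [hcase]
        exact hA'.trans (height_mono hple)
      · exact (hB' Q' rfl).trans (hsucc p' hplt)

end StrongSAux

open Order in
/-- If `D` is a strong S-domain of finite Krull dimension, then
`dim D[X] = dim D + 1`. -/
theorem statement_5 (D : Type*) [CommRing D] [IsDomain D] (h : IsStrongS D)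
    (hfin : ringKrullDim D < ⊤) : ringKrullDim D[X] = ringKrullDim D + 1 := by
  have hfin' : krullDim (PrimeSpectrum D) < ⊤ := hfin
  show krullDim (PrimeSpectrum D[X]) = krullDim (PrimeSpectrum D) + 1
  have hfinp : ∀ p : PrimeSpectrum D, height p ≠ ⊤ := by
    intro p hp
    have h1 : ((height p : ℕ∞) : WithBot ℕ∞) ≤ krullDim (PrimeSpectrum D) := height_le_krullDim p
    rw [hp, WithBot.coe_top] at h1
    exact absurd (lt_of_le_of_lt h1 hfin') (lt_irrefl _)
  have upper : krullDim (PrimeSpectrum D[X]) ≤ krullDim (PrimeSpectrum D) + 1 := by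
    rw [krullDim_eq_iSup_height]
    apply iSup_le
    intro Q
    set p := SpecC Q with hpdef
    obtain ⟨m, hm⟩ := WithTop.ne_top_iff_exists.mp (hfinp p)
    have hm' : height p = (m : ℕ∞) := by exact_mod_cast hm.symm
    have hB := (AB h hfinp m p (le_of_eq hm')).2 Q rfl
    calc ((height Q : ℕ∞) : WithBot ℕ∞) ≤ ((height p + 1 : ℕ∞) : WithBot ℕ∞) := by
          exact_mod_cast hB
      _ = ((height p : ℕ∞) : WithBot ℕ∞) + 1 := by push_cast; rfl
      _ ≤ krullDim (PrimeSpectrum D) + 1 := add_le_add_left (height_le_krullDim p) 1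
  have lower : krullDim (PrimeSpectrum D) + 1 ≤ krullDim (PrimeSpectrum D[X]) := by
    have hnb : krullDim (PrimeSpectrum D) ≠ ⊥ := by
      intro hb
      have h0 : (0 : WithBot ℕ∞) ≤ krullDim (PrimeSpectrum D) := krullDim_nonneg
      rw [hb] at h0
      exact absurd h0 (by simp)
    obtain ⟨e, he⟩ := WithBot.ne_bot_iff_exists.mp hnb
    have het : e ≠ ⊤ := by
      rintro rfl
      rw [← he, WithBot.coe_top] at hfin'
      exact absurd hfin' (lt_irrefl _)
    obtain ⟨n, hn⟩ := WithTop.ne_top_iff_exists.mp het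
    have hn' : e = (n : ℕ∞) := by exact_mod_cast hn.symm
    have hd : krullDim (PrimeSpectrum D) = ((n : ℕ∞) : WithBot ℕ∞) := by rw [← he, hn']
    have hsup : krullDim (PrimeSpectrum D) =
        ((⨆ p : PrimeSpectrum D, height p : ℕ∞) : WithBot ℕ∞) :=
      krullDim_eq_iSup_height_of_nonempty
    have hsup' : (⨆ p : PrimeSpectrum D, height p) = (n : ℕ∞) := by
      have : ((⨆ p : PrimeSpectrum D, height p : ℕ∞) : WithBot ℕ∞) = ((n : ℕ∞) : WithBot ℕ∞) := by
        rw [← hsup]; exact hd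
      exact_mod_cast this
    obtain ⟨p, hp⟩ : ∃ p : PrimeSpectrum D, (n : ℕ∞) ≤ height p := by
      rcases n with _ | k
      · exact ⟨Nonempty.some inferInstance, by simp⟩
      · have hlt : ((k : ℕ∞)) < ⨆ p : PrimeSpectrum D, height p := by
          rw [hsup']
          exact_mod_cast Nat.lt_succ_self k
        obtain ⟨p, hp⟩ := lt_iSup_iff.mp hlt
        refine ⟨p, ?_⟩
        have h2 := (ENat.add_one_le_iff (by simp : (k : ℕ∞) ≠ ⊤)).mpr hp
        exact_mod_cast h2
    set Qt : PrimeSpectrum D[X] :=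
      ⟨p.asIdeal.comap (evalRingHom (0 : D)),
        by have := p.isPrime; exact Ideal.IsPrime.comap _⟩ with hQt
    have hlt : SpecPX p < Qt := by
      refine lt_of_le_of_ne ?_ ?_
      · show (SpecPX p).asIdeal ≤ Qt.asIdeal
        intro f hf
        have hf' : f ∈ p.asIdeal.map (C : D →+* D[X]) := hf
        rw [Ideal.mem_map_C_iff] at hf'
        show f ∈ Ideal.comap (evalRingHom (0 : D)) p.asIdeal
        rw [Ideal.mem_comap, coe_evalRingHom, ← coeff_zero_eq_eval_zero]
        exact hf' 0
      · intro he2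
        have hX1 : (X : D[X]) ∈ Qt.asIdeal := by
          show X ∈ Ideal.comap (evalRingHom (0 : D)) p.asIdeal
          rw [Ideal.mem_comap, coe_evalRingHom, eval_X]
          exact p.asIdeal.zero_mem
        rw [← he2] at hX1
        have hX2 : (X : D[X]) ∈ p.asIdeal.map (C : D →+* D[X]) := hX1
        have := (Ideal.mem_map_C_iff.mp hX2) 1
        rw [coeff_X_one] at this
        exact p.isPrime.ne_top (Ideal.eq_top_of_isUnit_mem _ this isUnit_one)
    have hm1 : height p ≤ height (SpecPX p) :=
      height_le_height_apply_of_strictMono _ SpecPX_strictMono p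
    have hm2 : height (SpecPX p) + 1 ≤ height Qt := _root_.height_add_one_le hlt
    have hfinal : (n : ℕ∞) + 1 ≤ height Qt :=
      le_trans (add_le_add_left (hp.trans hm1) 1) hm2
    calc krullDim (PrimeSpectrum D) + 1 = ((n : ℕ∞) : WithBot ℕ∞) + 1 := by rw [hd]
      _ = (((n : ℕ∞) + 1 : ℕ∞) : WithBot ℕ∞) := by push_cast; rfl
      _ ≤ ((height Qt : ℕ∞) : WithBot ℕ∞) := by exact_mod_cast hfinal
      _ ≤ krullDim (PrimeSpectrum D[X]) := height_le_krullDim Qt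
  exact le_antisymm upper lower
end

section
/- Let D be a domain, T an overring, Q a prime ideal of T, q = Q ∩ D, and let D(Q) := D_q + QT_Q be the pullback of the canonical embedding k(q) → k(Q) along the surjection T_Q → k(Q). Then dim(D(Q)) = dim(T_Q). -/
set_option synthInstance.maxHeartbeats 1000000
set_option maxHeartbeats 1000000

open Polynomial

open IsLocalRing in
theorem key_dim {B : Type*} [CommRing B] [IsLocalRing B] (A : Subring B)
    (hM : (maximalIdeal B : Set B) ⊆ A)
    (hinv : ∀ x y : B, x ∈ A → x * y = 1 → y ∈ A) :
    ringKrullDim A = ringKrullDim B := by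
  set f : A →+* B := A.subtype with hf
  set g : PrimeSpectrum B → PrimeSpectrum A :=
    fun P => ⟨P.asIdeal.comap f, Ideal.IsPrime.comap f⟩ with hg
  have reflect : ∀ P₁ P₂ : PrimeSpectrum B, g P₁ ≤ g P₂ → P₁ ≤ P₂ := by
    intro P₁ P₂ h
    by_cases hs : ∃ s ∈ maximalIdeal B, s ∉ P₂.asIdeal
    · obtain ⟨s, hsM, hsP₂⟩ := hs
      intro b hb
      have hsb : s * b ∈ P₁.asIdeal := Ideal.mul_mem_left _ s hb
      have hsbA : s * b ∈ A := hM (Ideal.mul_mem_right b _ hsM)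
      have : (⟨s * b, hsbA⟩ : A) ∈ (g P₁).asIdeal := hsb
      have h2 : s * b ∈ P₂.asIdeal := h this
      rcases P₂.isPrime.mem_or_mem h2 with h3 | h3
      · exact absurd h3 hsP₂
      · exact h3
    · push_neg at hs
      calc P₁.asIdeal ≤ maximalIdeal B := le_maximalIdeal P₁.isPrime.ne_top
        _ ≤ P₂.asIdeal := hs
  have surj : Function.Surjective g := by
    intro p
    by_cases hs : ∀ x : A, (x : B) ∈ maximalIdeal B → x ∈ p.asIdeal
    · refine ⟨⟨maximalIdeal B, inferInstance⟩, ?_⟩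
      ext a
      constructor
      · intro ha; exact hs a ha
      · intro ha
        by_contra hna
        have hu : IsUnit (a : B) := by
          by_contra hnu
          exact hna (mem_maximalIdeal _ |>.2 hnu)
        obtain ⟨y, hy⟩ := hu.exists_right_inv
        have hyA : y ∈ A := hinv _ y a.2 hy
        have h1 : a * (⟨y, hyA⟩ : A) = 1 := by
          ext; exact hy
        have : (1 : A) ∈ p.asIdeal := h1 ▸ Ideal.mul_mem_right _ _ ha
        exact p.isPrime.ne_top (Ideal.eq_top_iff_one _ |>.2 this)
    · push_neg at hs
      obtain ⟨s, hsM, hsp⟩ := hs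
      set S : Set B := (↑) '' (p.asIdeal : Set A) with hS
      have hS_coe : ∀ a : A, (a : B) ∈ S ↔ a ∈ p.asIdeal := by
        intro a
        constructor
        · rintro ⟨a', ha', haa⟩
          have : a' = a := Subtype.ext haa
          exact this ▸ ha'
        · intro ha; exact ⟨a, ha, rfl⟩
      have hS_mul : ∀ (c : A) (x : B), x ∈ S → (c : B) * x ∈ S := by
        rintro c x ⟨a, ha, rfl⟩
        exact ⟨c * a, Ideal.mul_mem_left _ c ha, rfl⟩
      have hS_add : ∀ x y : B, x ∈ S → y ∈ S → x + y ∈ S := by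
        rintro x y ⟨a, ha, rfl⟩ ⟨b, hb, rfl⟩
        exact ⟨a + b, Ideal.add_mem _ ha hb, rfl⟩
      have hsnp : ∀ n : ℕ, s ^ (n + 1) ∉ p.asIdeal := fun n h =>
        hsp (p.isPrime.mem_of_pow_mem _ h)
      -- the candidate prime of B
      have key_mono : ∀ (n : ℕ) (b : B), (s : B) ^ (n + 1) * b ∈ S →
          (s : B) ^ (n + 2) * b ∈ S := by
        intro n b hb
        have := hS_mul s _ hb
        have he : (s : B) * ((s:B) ^ (n+1) * b) = (s:B) ^ (n + 2) * b := by ring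
        rwa [he] at this
      have key_le : ∀ (n m : ℕ) (b : B), n ≤ m → (s : B) ^ (n + 1) * b ∈ S →
          (s : B) ^ (m + 1) * b ∈ S := by
        intro n m b hnm hb
        induction m with
        | zero => simpa [Nat.le_zero.1 hnm] using hb
        | succ m ih =>
          rcases Nat.lt_or_ge n (m+1) with h | h
          · exact key_mono m b (ih (Nat.lt_succ_iff.1 h))
          · have : n = m + 1 := le_antisymm hnm h
            rwa [this] at hb
      set q : Ideal B :=
        { carrier := {b : B | ∃ n : ℕ, (s : B) ^ (n + 1) * b ∈ S}
          zero_mem' := ⟨0, by simpa using (hS_coe 0).2 (Ideal.zero_mem _)⟩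
          add_mem' := by
            rintro x y ⟨n, hn⟩ ⟨m, hm⟩
            refine ⟨max n m, ?_⟩
            rw [mul_add]
            exact hS_add _ _ (key_le n _ x (le_max_left n m) hn)
              (key_le m _ y (le_max_right n m) hm)
          smul_mem' := by
            rintro c x ⟨n, hn⟩
            refine ⟨n + 1, ?_⟩
            have hscA : (s : B) * c ∈ A := hM (Ideal.mul_mem_right c _ hsM)
            have := hS_mul ⟨(s:B) * c, hscA⟩ _ hn
            have he : ((s : B) * c) * ((s:B) ^ (n+1) * x) = (s:B) ^ (n + 1 + 1) * (c • x) := by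
              simp [smul_eq_mul]; ring
            rwa [he] at this } with hq
      have hq_prime : q.IsPrime := by
        constructor
        · intro htop
          have h1 : (1 : B) ∈ q := htop ▸ Submodule.mem_top
          obtain ⟨n, hn⟩ := h1
          rw [mul_one] at hn
          have : ((s ^ (n+1) : A) : B) ∈ S := by push_cast; exact hn
          exact hsnp n ((hS_coe _).1 this)
        · intro x y hxy
          obtain ⟨n, hn⟩ := hxy
          have h2 := hS_mul (s * s) _ hn
          have hsxA : (s : B) ^ (n + 2) * x ∈ A := by
            have h3 : (s:B) * x ∈ A := hM (Ideal.mul_mem_right x _ hsM)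
            have h4 : (s : B) ^ (n + 2) * x = ((s ^ (n+1) : A) : B) * ((s:B) * x) := by
              push_cast; ring
            rw [h4]
            exact Subring.mul_mem _ (s ^ (n+1)).2 h3
          have hsyA : (s : B) * y ∈ A := hM (Ideal.mul_mem_right y _ hsM)
          have he : ((s * s : A) : B) * ((s:B) ^ (n+1) * (x * y))
              = ((s:B) ^ (n + 2) * x) * ((s:B) * y) := by push_cast; ring
          rw [he] at h2
          have h5 := hS_coe (⟨_, hsxA⟩ * ⟨_, hsyA⟩ : A)
          rcases p.isPrime.mem_or_mem (h5.1 h2) with h6 | h6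
          · left
            exact ⟨n + 1, (hS_coe ⟨_, hsxA⟩).2 h6⟩
          · right
            refine ⟨0, ?_⟩
            have := (hS_coe ⟨_, hsyA⟩).2 h6
            simpa using this
      refine ⟨⟨q, hq_prime⟩, ?_⟩
      ext a
      constructor
      · rintro ⟨n, hn⟩
        have : ((s ^ (n+1) * a : A) : B) ∈ S := by push_cast; exact hn
        have h7 : s ^ (n+1) * a ∈ p.asIdeal := (hS_coe _).1 this
        rcases p.isPrime.mem_or_mem h7 with h8 | h8
        · exact absurd h8 (hsnp n)
        · exact h8
      · intro ha
        refine ⟨0, ?_⟩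
        have : ((s * a : A) : B) ∈ S := (hS_coe _).2 (Ideal.mul_mem_left _ s ha)
        exact (by simpa using this : (s : B) ^ (0 + 1) * (a : B) ∈ S)
  have inj : Function.Injective g := fun P₁ P₂ h =>
    le_antisymm (reflect _ _ h.le) (reflect _ _ h.ge)
  have mono : ∀ P₁ P₂ : PrimeSpectrum B, P₁ ≤ P₂ → g P₁ ≤ g P₂ := by
    intro P₁ P₂ h
    exact Ideal.comap_mono h
  let e : PrimeSpectrum B ≃o PrimeSpectrum A :=
    { toEquiv := Equiv.ofBijective g ⟨inj, surj⟩
      map_rel_iff' := by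
        intro P₁ P₂
        exact ⟨reflect _ _, mono _ _⟩ }
  rw [ringKrullDim, ringKrullDim]
  exact (Order.krullDim_eq_of_orderIso e).symm

/-- For the pullback `D(Q) = D_q + QT_Q`, one has `dim D(Q) = dim T_Q`. -/
theorem statement_6 (D : Type*) [CommRing D] [IsDomain D]
    (T : Subalgebra D (FractionRing D)) (Q : Ideal T) [Q.IsPrime] :
    ringKrullDim (DQ D T Q) = ringKrullDim (Localization.AtPrime Q) := by
  refine key_dim (B := Localization.AtPrime Q) (DQ D T Q) ?_ ?_
  · intro x hx
    have : IsLocalRing.residue (Localization.AtPrime Q) x = 0 :=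
      Ideal.Quotient.eq_zero_iff_mem.2 hx
    show IsLocalRing.residue (Localization.AtPrime Q) x ∈ (kqSub D T Q).toSubring
    rw [this]
    exact Subring.zero_mem _
  · intro x y hx hxy
    have h1 : IsLocalRing.residue (Localization.AtPrime Q) x * IsLocalRing.residue (Localization.AtPrime Q) y = 1 := by
      rw [← map_mul, hxy, map_one]
    have h2 : IsLocalRing.residue (Localization.AtPrime Q) y = (IsLocalRing.residue (Localization.AtPrime Q) x)⁻¹ :=
      (inv_eq_of_mul_eq_one_right h1).symm
    show IsLocalRing.residue (Localization.AtPrime Q) y ∈ (kqSub D T Q).toSubring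
    rw [h2]
    exact Subfield.inv_mem _ hx
end

section
/- If D is a quasi-Prüfer domain and P a prime ideal of D, then the localization D_P is a quasi-Prüfer domain. -/
set_option synthInstance.maxHeartbeats 1000000
set_option maxHeartbeats 1000000

open Polynomial

/-- If `D` is quasi-Prüfer and `P` is a prime of `D`, then `D_P` is
quasi-Prüfer. -/
theorem statement_12 (D : Type*) [CommRing D] [IsDomain D] (h : IsQuasiPrufer D)
    (P : Ideal D) [P.IsPrime] : IsQuasiPrufer (Localization.AtPrime P) := by
  intro P' hP' Q' hQ' hle
  set R := Localization.AtPrime P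
  set φ : D[X] →+* R[X] := Polynomial.mapRingHom (algebraMap D R)
  -- P₀ : prime of D, Q₀ : prime of D[X]
  set P₀ : Ideal D := P'.comap (algebraMap D R) with hP₀
  set Q₀ : Ideal D[X] := Q'.comap φ with hQ₀
  haveI : P₀.IsPrime := Ideal.IsPrime.comap _
  haveI : Q₀.IsPrime := Ideal.IsPrime.comap _
  have hQ₀le : Q₀ ≤ P₀.map (C : D →+* D[X]) := by
    intro f hf
    rw [Ideal.mem_map_C_iff]
    intro n
    have hφf : φ f ∈ P'.map (C : R →+* R[X]) := hle hf
    have := Ideal.mem_map_C_iff.mp hφf n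
    simpa [φ, hP₀, Polynomial.coeff_map] using this
  have key : Q₀ = (Q₀.comap (C : D →+* D[X])).map (C : D →+* D[X]) :=
    h P₀ ‹P₀.IsPrime› Q₀ ‹Q₀.IsPrime› hQ₀le
  -- now prove Q' = (Q'.comap C).map C
  refine le_antisymm ?_ (Ideal.map_comap_le)
  intro g hg
  rw [Ideal.mem_map_C_iff]
  intro n
  -- clear denominators
  obtain ⟨b, hb⟩ := IsLocalization.integerNormalization_map_to_map P.primeCompl g
  set f : D[X] := IsLocalization.integerNormalization P.primeCompl g with hf
  have hunit : IsUnit ((C : R →+* R[X]) (algebraMap D R b)) := by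
    refine IsUnit.map (C : R →+* R[X]) ?_
    exact IsLocalization.map_units R b
  have hfQ₀ : f ∈ Q₀ := by
    show φ f ∈ Q'
    have : φ f = (C : R →+* R[X]) (algebraMap D R b) * g := by
      have : φ f = (b : D) • g := hb
      rw [this]
      ext m
      rw [Polynomial.coeff_smul, Polynomial.coeff_C_mul, Algebra.smul_def]
    rw [this]
    exact Ideal.mul_mem_left _ _ hg
  have hcoef : ∀ m, (C : R →+* R[X]) ((φ f).coeff m) ∈ Q' := by
    intro m
    have hfm : f.coeff m ∈ Q₀.comap (C : D →+* D[X]) :=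
      Ideal.mem_map_C_iff.mp (key ▸ hfQ₀) m
    have : φ ((C : D →+* D[X]) (f.coeff m)) ∈ Q' := hfm
    simpa [φ] using this
  -- coeff n of φ f = algebraMap b * coeff n g
  have hcoeq : (φ f).coeff n = algebraMap D R b * g.coeff n := by
    have : φ f = (C : R →+* R[X]) (algebraMap D R b) * g := by
      have : φ f = (b : D) • g := hb
      rw [this]
      ext m
      rw [Polynomial.coeff_smul, Polynomial.coeff_C_mul, Algebra.smul_def]
    rw [this, Polynomial.coeff_C_mul]
  have hmem : (C : R →+* R[X]) (algebraMap D R b) * (C : R →+* R[X]) (g.coeff n) ∈ Q' := by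
    rw [← map_mul, ← hcoeq]; exact hcoef n
  have := hQ'.mem_or_mem hmem
  rcases this with h1 | h2
  · exact absurd h1 (fun hc => hQ'.ne_top (Ideal.eq_top_of_isUnit_mem _ hc hunit))
  · exact h2
end

section
/- Let D be a domain with fraction field K and let T be an overring. For any prime Q of T and q = Q ∩ D, the residue field k(Q) = T_Q/QT_Q naturally contains (an isomorphic copy of) a field extension of k(q) = Frac(D/q); if D is quasi-Prüfer, this extension is algebraic. -/
open Polynomial

set_option synthInstance.maxHeartbeats 1000000
set_option maxHeartbeats 1000000
/-- For an overring `T` of `D`, a prime `Q` of `T` and `q = Q ∩ D`, the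
residue field `k(Q) = Frac(T/Q)` contains a copy of `k(q) = Frac(D/q)`: there is a field
embedding `Frac(D/q) → Frac(T/Q)` compatible with the natural map `D/q → T/Q`; and if `D`
is quasi-Prüfer, this extension is algebraic. -/
theorem statement_19 (D : Type*) [CommRing D] [IsDomain D]
    (T : Subring (FractionRing D)) (hT : ∀ d : D, algebraMap D (FractionRing D) d ∈ T)
    (Q : Ideal T) [Q.IsPrime] :
    ∃ φ : FractionRing (D ⧸ Q.comap ((algebraMap D (FractionRing D)).codRestrict T hT)) →+*
        FractionRing (↥T ⧸ Q),
      (∀ a : D ⧸ Q.comap ((algebraMap D (FractionRing D)).codRestrict T hT),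
        φ (algebraMap _ _ a) = algebraMap _ _
          (Ideal.quotientMap Q ((algebraMap D (FractionRing D)).codRestrict T hT) le_rfl a)) ∧
      (IsQuasiPrufer D → ∀ x : FractionRing (↥T ⧸ Q),
        ∃ p : Polynomial
            (FractionRing (D ⧸ Q.comap ((algebraMap D (FractionRing D)).codRestrict T hT))),
          p ≠ 0 ∧ Polynomial.eval₂ φ x p = 0) := by
  classical
  set K := FractionRing D with hK
  set f : D →+* T := (algebraMap D K).codRestrict T hT with hfdef
  haveI : (Q.comap f).IsPrime := Ideal.IsPrime.comap f
  set q : Ideal D := Q.comap f with hqdef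
  set kq := FractionRing (D ⧸ q) with hkq
  set L := FractionRing (↥T ⧸ Q) with hL
  set g : (D ⧸ q) →+* L :=
    (algebraMap (↥T ⧸ Q) L).comp (Ideal.quotientMap Q f le_rfl) with hgdef
  have hginj : Function.Injective g :=
    (IsFractionRing.injective (↥T ⧸ Q) L).comp Ideal.quotientMap_injective
  refine ⟨IsFractionRing.lift hginj, fun a => IsFractionRing.lift_algebraMap hginj a, ?_⟩
  set φ : kq →+* L := IsFractionRing.lift hginj with hφdef
  intro hQP
  letI : Algebra kq L := φ.toAlgebra
  have halgmap : algebraMap kq L = φ := rfl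
  set χ : ↥T →+* L := (algebraMap (↥T ⧸ Q) L).comp (Ideal.Quotient.mk Q) with hχdef
  have hhom : (algebraMap kq L).comp
      ((algebraMap (D ⧸ q) kq).comp (Ideal.Quotient.mk q)) = χ.comp f := by
    ext d
    simp only [RingHom.coe_comp, Function.comp_apply, halgmap, hφdef,
      IsFractionRing.lift_algebraMap, hgdef, hχdef, Ideal.quotientMap_mk]
  -- Step 1: every element of the image of T/Q in L is algebraic over kq
  have key : ∀ t : ↥T, IsAlgebraic kq (χ t) := by
    intro t
    by_contra htr
    obtain ⟨⟨a, b⟩, hab⟩ := IsLocalization.surj (nonZeroDivisors D) (t : K)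
    set Φ : D[X] →+* K := (T.subtype).comp (Polynomial.eval₂RingHom f t) with hΦdef
    have hΦC : ∀ d : D, Φ (Polynomial.C d) = algebraMap D K d := by
      intro d
      simp only [hΦdef, RingHom.coe_comp, Function.comp_apply,
        Polynomial.coe_eval₂RingHom, Polynomial.eval₂_C]
      rfl
    set Q' : Ideal D[X] := RingHom.ker Φ with hQ'def
    haveI : Q'.IsPrime := RingHom.ker_isPrime Φ
    have hQ'le : Q' ≤ q.map Polynomial.C := by
      intro p hp
      rw [Ideal.mem_map_C_iff]
      have hp' : Φ p = 0 := hp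
      have h0 : Polynomial.eval₂ f t p = 0 := by
        apply Subtype.coe_injective
        simpa [hΦdef] using hp'
      have h1 : Polynomial.eval₂ (χ.comp f) (χ t) p = 0 := by
        rw [← Polynomial.hom_eval₂, h0, map_zero]
      set pbar : Polynomial kq :=
        (p.map (Ideal.Quotient.mk q)).map (algebraMap (D ⧸ q) kq) with hpbar
      have h2 : Polynomial.aeval (χ t) pbar = 0 := by
        rw [hpbar, Polynomial.aeval_def, Polynomial.eval₂_map, Polynomial.eval₂_map,
          RingHom.comp_assoc, hhom]
        exact h1
      have hpbar0 : pbar = 0 := by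
        by_contra hne
        exact htr ⟨pbar, hne, h2⟩
      have hmap0 : p.map (Ideal.Quotient.mk q) = 0 := by
        have hinj2 : Function.Injective (algebraMap (D ⧸ q) kq) :=
          IsFractionRing.injective (D ⧸ q) kq
        rwa [hpbar, Polynomial.map_eq_zero_iff hinj2] at hpbar0
      intro n
      have := congrArg (fun r => Polynomial.coeff r n) hmap0
      simp only [Polynomial.coeff_map, Polynomial.coeff_zero] at this
      rwa [Ideal.Quotient.eq_zero_iff_mem] at this
    have hcomap : Q'.comap (Polynomial.C : D →+* D[X]) = ⊥ := by
      ext d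
      simp only [Ideal.mem_comap, hQ'def, RingHom.mem_ker, hΦC, Ideal.mem_bot]
      constructor
      · intro h
        apply IsFractionRing.injective D K
        rw [h, map_zero]
      · rintro rfl; exact map_zero _
    have hQ'bot : Q' = ⊥ := by
      rw [hQP q ‹q.IsPrime› Q' ‹Q'.IsPrime› hQ'le, hcomap, Ideal.map_bot]
    have hmem : (Polynomial.C (b : D) * Polynomial.X - Polynomial.C a : D[X]) ∈ Q' := by
      simp only [hQ'def, RingHom.mem_ker, map_sub, map_mul, hΦC]
      have hX : Φ Polynomial.X = (t : K) := by
        simp only [hΦdef, RingHom.coe_comp, Function.comp_apply,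
          Polynomial.coe_eval₂RingHom, Polynomial.eval₂_X]
        rfl
      rw [hX, mul_comm, hab, sub_self]
    rw [hQ'bot, Ideal.mem_bot] at hmem
    have hb : (b : D) ≠ 0 := nonZeroDivisors.coe_ne_zero b
    apply hb
    have := congrArg (fun r => Polynomial.coeff r 1) hmem
    simpa using this
  -- Step 2: every element of L is algebraic over kq
  intro x
  obtain ⟨r, s, hs, rfl⟩ := IsFractionRing.div_surjective (A := ↥T ⧸ Q) x
  obtain ⟨t1, rfl⟩ := Ideal.Quotient.mk_surjective r
  obtain ⟨t2, rfl⟩ := Ideal.Quotient.mk_surjective s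
  have h1 : IsAlgebraic kq (algebraMap (↥T ⧸ Q) L (Ideal.Quotient.mk Q t1)) := key t1
  have h2 : IsAlgebraic kq (algebraMap (↥T ⧸ Q) L (Ideal.Quotient.mk Q t2)) := key t2
  have halg : IsAlgebraic kq (algebraMap (↥T ⧸ Q) L (Ideal.Quotient.mk Q t1) /
      algebraMap (↥T ⧸ Q) L (Ideal.Quotient.mk Q t2)) := by
    rw [div_eq_mul_inv]
    exact (h1.isIntegral.mul h2.inv.isIntegral).isAlgebraic
  obtain ⟨p, hp0, hp⟩ := halg
  exact ⟨p, hp0, by rwa [Polynomial.aeval_def, halgmap] at hp⟩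
end
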